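/- arXiv:2504.20286 — 2 statements merged into one kernel-verified Lean document; each statement's English description precedes it below -/
import Mathlib

section
/- Fix k ≥ 1 and let p(j) be the j-th smallest positive integer whose Zeckendorf decomposition has F_{2k} as its smallest summand. Then for j ≥ 2, F_{2k} appears in the Chung-Graham decomposition of p(j) if and only if the (j−1)-th letter of the golden string S is B. Moreover, every summand in the Chung-Graham decomposition of p(j) is at least F_{2k}. -/
/-- The finite golden strings: `gs 1 = [B]`, `gs 2 = [B, A]`, `gs n = gs (n-1) ++ gs (n-2)`.
Here `true` denotes the letter B and `false` denotes the letter A. -/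
def gs : ℕ → List Bool
  | 0 => []
  | 1 => [true]
  | 2 => [true, false]
  | (n+3) => gs (n+2) ++ gs (n+1)

/-- The `i`-th letter (1-indexed) of the infinite golden string `S`;
`true` = B, `false` = A.  Since `gs n` is a prefix of `gs (n+1)` and
`(gs (i+1)).length = F (i+2) ≥ i`, this is well-defined. -/
def goldenLetter (i : ℕ) : Bool := (gs (i+1)).getD (i-1) true

/-- `s` is the (index set of the) Zeckendorf decomposition of `n`:
a set of indices `≥ 2`, no two adjacent, with `n = ∑_{i ∈ s} F i`. -/
def IsZeck (n : ℕ) (s : Finset ℕ) : Prop :=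
  (∀ i ∈ s, 2 ≤ i) ∧ (∀ i ∈ s, i + 1 ∉ s) ∧ n = ∑ i ∈ s, Nat.fib i

/-- `c` is the coefficient function of the Chung–Graham decomposition of `n`:
`n = ∑_{i ≥ 1} c i * F (2i)` with `c i ∈ {0,1,2}` and a coefficient `0`
strictly between any two coefficients equal to `2`. -/
def IsCG (n : ℕ) (c : ℕ →₀ ℕ) : Prop :=
  (∀ i, c i ≤ 2) ∧ c 0 = 0 ∧
  (∀ i₁ i₂, i₁ < i₂ → c i₁ = 2 → c i₂ = 2 → ∃ j, i₁ < j ∧ j < i₂ ∧ c j = 0) ∧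
  n = c.sum (fun i a => a * Nat.fib (2 * i))

/-- `n` has `F (2k)` as the smallest summand of its Zeckendorf decomposition. -/
def ZeckMin (k n : ℕ) : Prop :=
  ∃ s : Finset ℕ, IsZeck n s ∧ 2 * k ∈ s ∧ ∀ i ∈ s, 2 * k ≤ i

/-- `n` has `F (2k)` or `2 F (2k)` as the smallest summand of its
Chung–Graham decomposition. -/
def CGMin (k n : ℕ) : Prop :=
  ∃ c : ℕ →₀ ℕ, IsCG n c ∧ 1 ≤ c k ∧ ∀ i < k, c i = 0

open Nat List Finset




lemma gs_len : ∀ n, (gs (n+1)).length = fib (n+2)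
  | 0 => rfl
  | 1 => rfl
  | (n+2) => by
      show (gs (n+2) ++ gs (n+1)).length = fib (n+2+2)
      rw [List.length_append, gs_len (n+1), gs_len n,
        show fib (n+2+2) = fib (n+2) + fib (n+2+1) from fib_add_two]
      exact Nat.add_comm _ _

lemma gs_prefix : ∀ n, gs (n+1) <+: gs (n+2)
  | 0 => ⟨[false], rfl⟩
  | (n+1) => ⟨gs (n+1), rfl⟩

lemma gs_prefix_le {m n : ℕ} (h : m ≤ n) : gs (m+1) <+: gs (n+1) := by
  induction n with
  | zero => simp [Nat.le_zero.mp h]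
  | succ n ih =>
    rcases Nat.lt_or_ge m (n+1) with h' | h'
    · exact (ih (by omega)).trans (gs_prefix n)
    · have : m = n + 1 := by omega
      subst this; exact List.prefix_rfl

lemma le_fib_add_two : ∀ i : ℕ, i ≤ fib (i+2)
  | 0 => by simp
  | (i+1) => by
      have h1 := le_fib_add_two i
      have h2 : 1 ≤ fib (i+1) := fib_pos.mpr (by omega)
      have h3 : fib (i+1+2) = fib (i+1) + fib (i+1+1) := fib_add_two
      simp only [show i+1+1 = i+2 from rfl] at h3
      omega

lemma letter_eq {i n : ℕ} (h1 : 1 ≤ i) (h2 : i ≤ fib (n+2)) :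
    goldenLetter i = (gs (n+1)).getD (i-1) true := by
  unfold goldenLetter
  rcases Nat.le_total i n with h | h
  · obtain ⟨t, ht⟩ := gs_prefix_le h
    rw [← ht, List.getD_append]
    rw [gs_len]
    have := le_fib_add_two i
    omega
  · obtain ⟨t, ht⟩ := gs_prefix_le h
    rw [← ht, List.getD_append]
    rw [gs_len]
    omega

lemma letter_fib : ∀ m, goldenLetter (fib (m+2)) = decide (Even m)
  | 0 => by simp [goldenLetter, gs, Nat.fib_two]
  | 1 => by
      have : fib 3 = 2 := rfl
      rw [show (1:ℕ)+2 = 3 from rfl, this]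
      simp [goldenLetter, gs]
  | (m+2) => by
      have h1 : 1 ≤ fib (m+2+2) := fib_pos.mpr (by omega)
      have e1 : fib (m+2+2) = fib (m+2) + fib (m+2+1) := fib_add_two
      have e2 : fib (m+2+1) = fib (m+1) + fib (m+2) := by
        rw [show m+2+1 = m+1+2 from rfl]; exact fib_add_two
      have h2 : 1 ≤ fib (m+2) := fib_pos.mpr (by omega)
      rw [letter_eq h1 (le_refl _)]
      rw [show gs (m+2+1) = gs (m+2) ++ gs (m+1) from by rw [show m+2+1 = m+3 from rfl, gs]]
      rw [List.getD_append_right _ _ _ _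
        (by rw [gs_len, show m+1+2 = m+2+1 from rfl]; omega)]
      rw [gs_len]
      rw [show fib (m+2+2) - 1 - fib (m+1+2) = fib (m+2) - 1 from by
        rw [show m+1+2 = m+2+1 from rfl]; omega]
      rw [← letter_eq h2 (le_refl _), letter_fib m]
      simp only [decide_eq_decide]
      rw [Nat.even_iff, Nat.even_iff]; omega

lemma letter_rec {m i : ℕ} (h4 : fib (m+4) < i) (h5 : i < fib (m+5)) :
    goldenLetter i = goldenLetter (i - fib (m+4)) := by
  have e1 : fib (m+5) = fib (m+3) + fib (m+4) := by
    rw [show m+5 = m+3+2 from rfl, fib_add_two, show m+3+1 = m+4 from rfl]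
  have h1 : 1 ≤ i := by omega
  rw [letter_eq h1 (show i ≤ fib (m+3+2) from by rw [show m+3+2 = m+5 from rfl]; omega)]
  rw [show gs (m+3+1) = gs (m+3) ++ gs (m+2) from by rw [show m+3+1 = m+1+3 from rfl, gs]]
  rw [List.getD_append_right _ _ _ _ (by rw [gs_len]; rw [show m+2+2 = m+4 from rfl]; omega)]
  rw [gs_len, show m+2+2 = m+4 from rfl]
  rw [show i - 1 - fib (m+4) = (i - fib (m+4)) - 1 from by omega]
  rw [← letter_eq (show 1 ≤ i - fib (m+4) from by omega)
    (show i - fib (m+4) ≤ fib (m+1+2) from by rw [show m+1+2 = m+3 from rfl]; omega)]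

lemma letter_minZeck : ∀ i, 1 ≤ i →
    (goldenLetter i = true ↔ Even ((Nat.zeckendorf i).getLast?.getD 0)) := by
  intro i
  induction i using Nat.strong_induction_on with
  | _ i IH =>
    intro hi
    obtain ⟨m, hm⟩ : ∃ m, greatestFib i = m := ⟨_, rfl⟩
    have hfm : fib m ≤ i := hm ▸ fib_greatestFib_le i
    have hfm1 : i < fib (m+1) := by rw [← hm]; exact lt_fib_greatestFib_add_one i
    have hm2 : 2 ≤ m := by
      rw [← hm]; exact le_greatestFib.mpr (by simpa [Nat.fib_two] using hi)
    have hz : Nat.zeckendorf i = m :: Nat.zeckendorf (i - fib m) := by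
      rw [← hm]; exact Nat.zeckendorf_of_pos (by omega)
    rcases Nat.eq_or_lt_of_le hfm with heq | hlt
    · -- i = fib m
      rw [hz, ← heq]
      simp only [Nat.sub_self, Nat.zeckendorf_zero, List.getLast?_singleton,
        Option.getD_some]
      obtain ⟨m', rfl⟩ : ∃ m', m = m' + 2 := ⟨m - 2, by omega⟩
      rw [letter_fib m']
      rw [decide_eq_true_iff]
      rw [Nat.even_iff, Nat.even_iff]; omega
    · -- fib m < i
      obtain ⟨r, hr⟩ : ∃ r, i - fib m = r := ⟨_, rfl⟩
      have hr1 : 1 ≤ r := by omega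
      have hrlt : r < fib (m - 1) := by
        have h := greatestFib_sub_fib_greatestFib_le_greatestFib (n := i) (by omega)
        rw [hm, hr] at h
        exact greatestFib_lt.mp (by omega)
      have hm4 : 4 ≤ m := by
        by_contra hc
        push_neg at hc
        have e1 : fib (m+1) = fib (m-1) + fib m := by
          rw [show m+1 = (m-1)+2 from by omega, fib_add_two,
            show m-1+1 = m from by omega]
        have : fib (m-1) ≤ fib 2 := fib_mono (by omega)
        rw [Nat.fib_two] at this
        omega
      obtain ⟨m'', rfl⟩ : ∃ m'', m = m'' + 4 := ⟨m - 4, by omega⟩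
      have hrec : goldenLetter i = goldenLetter r := by
        have e1 : fib (m''+5) = fib (m''+3) + fib (m''+4) := by
          rw [show m''+5 = m''+3+2 from rfl, fib_add_two, show m''+3+1 = m''+4 from rfl]
        have e2 : fib (m''+4+1) = fib (m''+5) := rfl
        have := letter_rec (m := m'') (i := i) hlt (by omega)
        rw [hr] at this
        exact this
      rw [hrec]
      have hzr : Nat.zeckendorf r ≠ [] := by
        rw [Nat.zeckendorf_of_pos (show 0 < r by omega)]
        simp
      obtain ⟨x, hx⟩ : ∃ x, (Nat.zeckendorf r).getLast? = some x := by
        cases h : (Nat.zeckendorf r).getLast?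
        · exact absurd (List.getLast?_eq_none_iff.mp h) hzr
        · exact ⟨_, rfl⟩
      rw [hz, hr, List.getLast?_cons, hx]
      simp only [Option.getD_some]
      have hfpos : 0 < fib (m''+4) := fib_pos.mpr (by omega)
      have := IH r (by omega) hr1
      rw [hx] at this
      simpa using this



def csum (c : ℕ → ℕ) (M : ℕ) : ℕ := ∑ i ∈ Finset.range M, c i * fib (2*i)

lemma csum_succ (c : ℕ → ℕ) (M : ℕ) : csum c (M+1) = csum c M + c M * fib (2*M) :=
  Finset.sum_range_succ _ _

lemma cg_bound : ∀ m (c : ℕ → ℕ), (∀ i, c i ≤ 2) → c 0 = 0 →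
    (∀ i₁ i₂, i₁ < i₂ → c i₁ = 2 → c i₂ = 2 → ∃ j, i₁ < j ∧ j < i₂ ∧ c j = 0) →
    (csum c (m+1) < fib (2*m+2) ∧
      ((∀ t, t ≤ m → c t = 2 → ∃ j, t < j ∧ j ≤ m ∧ c j = 0) →
        csum c (m+1) < fib (2*m+1))) := by
  intro m
  induction m with
  | zero =>
    intro c h2 h0 _
    constructor
    · simp [csum, h0, Nat.fib_two]
    · intro _; simp [csum, h0, Nat.fib_one]
  | succ m IH =>
    intro c h2 h0 hsep
    obtain ⟨ih1, ih2⟩ := IH c h2 h0 hsep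
    simp only [show 2*(m+1)+2 = 2*m+4 from by ring, show 2*(m+1)+1 = 2*m+3 from by ring,
      show m+1+1 = m+2 from rfl]
    have f1 : fib (2*m+4) = fib (2*m+2) + fib (2*m+3) := by
      rw [show 2*m+4 = (2*m+2)+2 from by ring, fib_add_two, show 2*m+2+1 = 2*m+3 from rfl]
    have f2 : fib (2*m+3) = fib (2*m+1) + fib (2*m+2) := by
      rw [show 2*m+3 = (2*m+1)+2 from by ring, fib_add_two, show 2*m+1+1 = 2*m+2 from rfl]
    have hcs : csum c (m+2) = csum c (m+1) + c (m+1) * fib (2*m+2) := by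
      rw [show m+2 = m+1+1 from rfl, csum_succ, show 2*(m+1) = 2*m+2 from by ring]
    have hc2le := h2 (m+1)
    constructor
    · rcases Nat.lt_or_ge (c (m+1)) 2 with hc | hc
      · have hb : c (m+1) * fib (2*m+2) ≤ fib (2*m+2) :=
          calc c (m+1) * fib (2*m+2) ≤ 1 * fib (2*m+2) :=
                Nat.mul_le_mul_right _ (by omega)
          _ = fib (2*m+2) := one_mul _
        omega
      · have hc2 : c (m+1) = 2 := le_antisymm (h2 _) hc
        have hsep' : ∀ t, t ≤ m → c t = 2 → ∃ j, t < j ∧ j ≤ m ∧ c j = 0 := by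
          intro t ht hct
          obtain ⟨j, hj1, hj2, hj3⟩ := hsep t (m+1) (by omega) hct hc2
          exact ⟨j, hj1, by omega, hj3⟩
        have hlow := ih2 hsep'
        have : c (m+1) * fib (2*m+2) = 2 * fib (2*m+2) := by rw [hc2]
        omega
    · intro hsep2
      have hc1 : c (m+1) ≤ 1 := by
        by_contra hc
        push_neg at hc
        have hc2 : c (m+1) = 2 := le_antisymm (h2 _) hc
        obtain ⟨j, hj1, hj2, _⟩ := hsep2 (m+1) le_rfl hc2
        omega
      rcases Nat.eq_or_lt_of_le hc1 with hc | hc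
      · -- c (m+1) = 1
        have hsep' : ∀ t, t ≤ m → c t = 2 → ∃ j, t < j ∧ j ≤ m ∧ c j = 0 := by
          intro t ht hct
          obtain ⟨j, hj1, hj2, hj3⟩ := hsep2 t (by omega) hct
          refine ⟨j, hj1, ?_, hj3⟩
          by_contra hgt
          have : j = m+1 := by omega
          rw [this] at hj3
          omega
        have hlow := ih2 hsep'
        have : c (m+1) * fib (2*m+2) = fib (2*m+2) := by rw [hc]; exact one_mul _
        omega
      · -- c (m+1) = 0
        have hc0 : c (m+1) = 0 := by omega
        have : c (m+1) * fib (2*m+2) = 0 := by rw [hc0, zero_mul]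
        have hf : fib (2*m+2) ≤ fib (2*m+3) := fib_mono (by omega)
        omega

lemma cg_unique_fun : ∀ M (c c' : ℕ → ℕ), (∀ i, c i ≤ 2) → c 0 = 0 →
    (∀ i₁ i₂, i₁ < i₂ → c i₁ = 2 → c i₂ = 2 → ∃ j, i₁ < j ∧ j < i₂ ∧ c j = 0) →
    (∀ i, c' i ≤ 2) → c' 0 = 0 →
    (∀ i₁ i₂, i₁ < i₂ → c' i₁ = 2 → c' i₂ = 2 → ∃ j, i₁ < j ∧ j < i₂ ∧ c' j = 0) →
    csum c M = csum c' M → ∀ i, i < M → c i = c' i := by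
  intro M
  induction M with
  | zero => intro _ _ _ _ _ _ _ _ _ i hi; omega
  | succ M IH =>
    intro c c' h2 h0 hsep h2' h0' hsep' hsum
    rcases Nat.eq_zero_or_pos M with rfl | hM
    · intro i hi
      interval_cases i
      rw [h0, h0']
    -- key: c M = c' M
    have key : ∀ (d d' : ℕ → ℕ), (∀ i, d i ≤ 2) → d 0 = 0 →
        (∀ i₁ i₂, i₁ < i₂ → d i₁ = 2 → d i₂ = 2 → ∃ j, i₁ < j ∧ j < i₂ ∧ d j = 0) →
        (∀ i, d' i ≤ 2) → d' 0 = 0 →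
        (∀ i₁ i₂, i₁ < i₂ → d' i₁ = 2 → d' i₂ = 2 → ∃ j, i₁ < j ∧ j < i₂ ∧ d' j = 0) →
        csum d (M+1) = csum d' (M+1) → d M < d' M → False := by
      intro d d' g2 g0 gsep g2' g0' gsep' gsum hlt
      obtain ⟨M', rfl⟩ : ∃ M', M = M' + 1 := ⟨M - 1, by omega⟩
      have b1 := (cg_bound M' d g2 g0 gsep).1
      have e1 : csum d (M'+1+1) = csum d (M'+1) + d (M'+1) * fib (2*(M'+1)) := csum_succ _ _
      have e2 : csum d' (M'+1+1) = csum d' (M'+1) + d' (M'+1) * fib (2*(M'+1)) := csum_succ _ _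
      have hfe : fib (2*(M'+1)) = fib (2*M'+2) := by rw [show 2*(M'+1) = 2*M'+2 from by ring]
      have hd' : csum d' (M'+1+1) ≥ d' (M'+1) * fib (2*(M'+1)) := by omega
      have hdlow : d (M'+1) * fib (2*(M'+1)) + fib (2*(M'+1)) ≤ d' (M'+1) * fib (2*(M'+1)) := by
        have : d (M'+1) + 1 ≤ d' (M'+1) := by omega
        calc d (M'+1) * fib (2*(M'+1)) + fib (2*(M'+1)) = (d (M'+1) + 1) * fib (2*(M'+1)) := by ring
        _ ≤ d' (M'+1) * fib (2*(M'+1)) := Nat.mul_le_mul_right _ this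
      rw [hfe] at e1 e2 hdlow
      omega
    have hMM : c M = c' M := by
      rcases Nat.lt_trichotomy (c M) (c' M) with h | h | h
      · exact absurd (key c c' h2 h0 hsep h2' h0' hsep' hsum h) (fun x => x)
      · exact h
      · exact absurd (key c' c h2' h0' hsep' h2 h0 hsep hsum.symm h) (fun x => x)
    have hsum' : csum c M = csum c' M := by
      have e1 := csum_succ c M
      have e2 := csum_succ c' M
      rw [hMM] at e1
      omega
    intro i hi
    rcases Nat.lt_or_ge i M with h | h
    · exact IH c c' h2 h0 hsep h2' h0' hsep' hsum' i h
    · have : i = M := by omega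
      rw [this]; exact hMM

lemma isCG_unique {n : ℕ} {c c' : ℕ →₀ ℕ} (h : IsCG n c) (h' : IsCG n c') : c = c' := by
  obtain ⟨h2, h0, hsep, hsum⟩ := h
  obtain ⟨h2', h0', hsep', hsum'⟩ := h'
  obtain ⟨M, hM⟩ : ∃ M, ∀ i, M ≤ i → (c i = 0 ∧ c' i = 0) := by
    refine ⟨(c.support ∪ c'.support).sup id + 1, fun i hi => ?_⟩
    constructor
    · by_contra hne
      have : i ∈ c.support := Finsupp.mem_support_iff.mpr hne
      have := Finset.le_sup (f := id) (Finset.mem_union_left c'.support this)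
      simp at this; omega
    · by_contra hne
      have : i ∈ c'.support := Finsupp.mem_support_iff.mpr hne
      have := Finset.le_sup (f := id) (Finset.mem_union_right c.support this)
      simp at this; omega
  have hcs : csum (⇑c) M = n := by
    rw [hsum]
    rw [Finsupp.sum_of_support_subset c (s := Finset.range M) ?_ _ (by simp)]
    · rfl
    · intro i hi
      simp only [Finset.mem_range]
      by_contra hge
      exact (Finsupp.mem_support_iff.mp hi) (hM i (by omega)).1
  have hcs' : csum (⇑c') M = n := by
    rw [hsum']
    rw [Finsupp.sum_of_support_subset c' (s := Finset.range M) ?_ _ (by simp)]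
    · rfl
    · intro i hi
      simp only [Finset.mem_range]
      by_contra hge
      exact (Finsupp.mem_support_iff.mp hi) (hM i (by omega)).2
  ext i
  rcases Nat.lt_or_ge i M with h | h
  · exact cg_unique_fun M (⇑c) (⇑c') h2 h0 hsep h2' h0' hsep' (by rw [hcs, hcs']) i h
  · rw [(hM i h).1, (hM i h).2]

structure CGInv (b u : ℕ) (f : ℕ → ℕ) (S : ℕ) : Prop where
  hbu : b ≤ u
  htop : 1 ≤ f u
  hle2 : ∀ i, f i ≤ 2
  hlow : ∀ i, i < b → f i = 0
  hhigh : ∀ i, u < i → f i = 0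
  hsep : ∀ i₁ i₂, i₁ < i₂ → f i₁ = 2 → f i₂ = 2 → ∃ j, i₁ < j ∧ j < i₂ ∧ f j = 0
  hsum : csum f (u+1) = S

lemma csum_stable {f : ℕ → ℕ} {u M : ℕ} (h : ∀ i, u < i → f i = 0) (hM : u + 1 ≤ M) :
    csum f M = csum f (u+1) := by
  unfold csum
  refine (Finset.sum_subset (by intro x hx; simp at hx ⊢; omega) ?_).symm
  intro x _ hx
  simp only [Finset.mem_range] at hx
  rw [h x (by omega), zero_mul]

lemma idOdd {u m : ℕ} (hm : u < m) :
    fib (2*m+1) + fib (2*u) = 2 * fib (2*u+2) + ∑ i ∈ Finset.Ico (u+2) (m+1), fib (2*i) := by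
  induction m, hm using Nat.le_induction with
  | base =>
    rw [show u+1+1 = u+2 from rfl, Finset.Ico_self, Finset.sum_empty]
    have f1 : fib (2*(u+1)+1) = fib (2*u+1) + fib (2*u+2) := by
      rw [show 2*(u+1)+1 = (2*u+1)+2 from by ring, fib_add_two, show 2*u+1+1 = 2*u+2 from rfl]
    have f2 : fib (2*u+2) = fib (2*u) + fib (2*u+1) := by
      rw [show 2*u+2 = (2*u)+2 from rfl, fib_add_two]
    have f3 : fib (2 * Nat.succ u + 1) = fib (2*(u+1)+1) := rfl
    omega
  | succ m hm ih =>
    rw [Finset.sum_Ico_succ_top (by omega)]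
    have f1 : fib (2*(m+1)+1) = fib (2*m+1) + fib (2*(m+1)) := by
      rw [show 2*(m+1)+1 = (2*m+1)+2 from by ring, fib_add_two,
        show 2*m+1+1 = 2*(m+1) from by ring]
    have f2 : fib (2 * Nat.succ m + 1) = fib (2*(m+1)+1) := rfl
    have f3 : fib (2 * Nat.succ m) = fib (2*(m+1)) := rfl
    have f4 : Nat.succ m + 1 = m + 1 + 1 := rfl
    omega

lemma stepEven {b u f S m} (hInv : CGInv b u f S) (hm : u < m) :
    CGInv b m (Function.update f m 1) (S + fib (2*m)) ∧
      (∀ x, x < m → Function.update f m 1 x = f x) := by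
  obtain ⟨hbu, htop, hle2, hlow, hhigh, hsep, hsum⟩ := hInv
  have heval : ∀ x, x ≠ m → Function.update f m 1 x = f x :=
    fun x hx => Function.update_of_ne hx _ _
  have hevalm : Function.update f m 1 m = 1 := Function.update_self _ _ _
  refine ⟨⟨by omega, by rw [hevalm], ?_, ?_, ?_, ?_, ?_⟩, fun x hx => heval x (by omega)⟩
  · intro i
    rcases eq_or_ne i m with rfl | h
    · rw [hevalm]; omega
    · rw [heval i h]; exact hle2 i
  · intro i hi; rw [heval i (by omega)]; exact hlow i hi
  · intro i hi; rw [heval i (by omega)]; exact hhigh i (by omega)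
  · intro i₁ i₂ h12 h1 h2
    have hi1 : i₁ ≠ m := by intro h; rw [h, hevalm] at h1; omega
    have hi2 : i₂ ≠ m := by intro h; rw [h, hevalm] at h2; omega
    rw [heval _ hi1] at h1; rw [heval _ hi2] at h2
    obtain ⟨j, hj1, hj2, hj3⟩ := hsep i₁ i₂ h12 h1 h2
    have hj2' : i₂ ≤ u := by
      by_contra hc; push_neg at hc; rw [hhigh i₂ hc] at h2; omega
    exact ⟨j, hj1, hj2, by rw [heval j (by omega)]; exact hj3⟩
  · have e1 : csum (Function.update f m 1) (m+1)
        = csum (Function.update f m 1) m + 1 * fib (2*m) := by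
      rw [show m+1 = m+1 from rfl, csum_succ, hevalm]
    have e2 : csum (Function.update f m 1) m = csum f m :=
      Finset.sum_congr rfl (fun x hx => by
        simp only [Finset.mem_range] at hx
        rw [heval x (by omega)])
    have e3 : csum f m = csum f (u+1) := csum_stable hhigh (by omega)
    rw [e1, e2, e3, hsum, one_mul]

lemma stepOdd {b u f S m} (hInv : CGInv b u f S) (hm : u < m) :
    ∃ f₁ : ℕ → ℕ, CGInv b m f₁ (S + fib (2*m+1)) ∧
      (∀ x, x < u → f₁ x = f x) ∧ f₁ u = f u - 1 := by
  obtain ⟨hbu, htop, hle2, hlow, hhigh, hsep, hsum⟩ := hInv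
  set f₁ : ℕ → ℕ := fun x => if x = u+1 then 2 else if u+2 ≤ x ∧ x ≤ m then 1
    else if x = u then f u - 1 else f x with hf₁
  have ev : ∀ x, f₁ x = if x = u+1 then 2 else if u+2 ≤ x ∧ x ≤ m then 1
      else if x = u then f u - 1 else f x := fun x => rfl
  have evlow : ∀ x, x < u → f₁ x = f x := by
    intro x hx; rw [ev x, if_neg (by omega), if_neg (by omega), if_neg (by omega)]
  have evhigh : ∀ x, m < x → f₁ x = f x := by
    intro x hx; rw [ev x, if_neg (by omega), if_neg (by omega), if_neg (by omega)]
  have evu : f₁ u = f u - 1 := by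
    rw [ev u, if_neg (by omega), if_neg (by omega), if_pos rfl]
  have evu1 : f₁ (u+1) = 2 := by rw [ev (u+1), if_pos rfl]
  have evmid : ∀ x, u+2 ≤ x → x ≤ m → f₁ x = 1 := by
    intro x h1 h2; rw [ev x, if_neg (by omega), if_pos ⟨h1, h2⟩]
  have char2 : ∀ x, f₁ x = 2 → x = u+1 ∨ (x < u ∧ f x = 2) := by
    intro x hx
    rcases eq_or_ne x (u+1) with rfl | h1
    · exact Or.inl rfl
    rcases Nat.lt_or_ge x u with h | h
    · right; exact ⟨h, by rw [← evlow x h]; exact hx⟩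
    rcases Nat.eq_or_lt_of_le h with rfl | h
    · rw [evu] at hx; have := hle2 u; omega
    rcases Nat.lt_or_ge m x with h2 | h2
    · rw [evhigh x h2, hhigh x (by omega)] at hx; omega
    · rw [evmid x (by omega) h2] at hx; omega
  refine ⟨f₁, ⟨by omega, ?_, ?_, ?_, ?_, ?_, ?_⟩, evlow, evu⟩
  · rcases Nat.eq_or_lt_of_le (show u+1 ≤ m by omega) with h | h
    · rw [← h, evu1]; omega
    · rw [evmid m (by omega) le_rfl]
  · intro i
    rcases eq_or_ne i (u+1) with rfl | h1
    · rw [evu1]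
    rcases Nat.lt_or_ge i u with h | h
    · rw [evlow i h]; exact hle2 i
    rcases Nat.eq_or_lt_of_le h with rfl | h
    · rw [evu]; have := hle2 u; omega
    rcases Nat.lt_or_ge m i with h2 | h2
    · rw [evhigh i h2]; exact hle2 i
    · rw [evmid i (by omega) h2]; omega
  · intro i hi; rw [evlow i (by omega)]; exact hlow i hi
  · intro i hi; rw [evhigh i hi]; exact hhigh i (by omega)
  · intro i₁ i₂ h12 h1 h2
    rcases char2 i₂ h2 with rfl | ⟨hi2, hfi2⟩
    · rcases char2 i₁ h1 with rfl | ⟨hi1, hfi1⟩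
      · omega
      rcases Nat.eq_or_lt_of_le (hle2 u) with hu2 | hu2
      · obtain ⟨j, hj1, hj2, hj3⟩ := hsep i₁ u hi1 hfi1 hu2
        exact ⟨j, hj1, by omega, by rw [evlow j (by omega)]; exact hj3⟩
      · refine ⟨u, hi1, by omega, ?_⟩
        rw [evu]; omega
    · rcases char2 i₁ h1 with rfl | ⟨hi1, hfi1⟩
      · omega
      obtain ⟨j, hj1, hj2, hj3⟩ := hsep i₁ i₂ h12 hfi1 hfi2
      exact ⟨j, hj1, hj2, by rw [evlow j (by omega)]; exact hj3⟩
  · have split1 : csum f₁ (m+1) = ∑ i ∈ Finset.range (u+2), f₁ i * fib (2*i)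
        + ∑ i ∈ Finset.Ico (u+2) (m+1), f₁ i * fib (2*i) := by
      rw [csum, Finset.range_eq_Ico, ← Finset.sum_Ico_consecutive _
        (show 0 ≤ u+2 by omega) (show u+2 ≤ m+1 by omega), ← Finset.range_eq_Ico]
    have A : ∑ i ∈ Finset.Ico (u+2) (m+1), f₁ i * fib (2*i)
        = ∑ i ∈ Finset.Ico (u+2) (m+1), fib (2*i) := by
      refine Finset.sum_congr rfl (fun x hx => ?_)
      rw [Finset.mem_Ico] at hx
      rw [evmid x hx.1 (by omega), one_mul]
    have B : ∑ i ∈ Finset.range (u+2), f₁ i * fib (2*i)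
        = csum f u + (f u - 1) * fib (2*u) + 2 * fib (2*u+2) := by
      rw [show u+2 = (u+1)+1 from rfl, Finset.sum_range_succ, Finset.sum_range_succ]
      have e1 : ∑ i ∈ Finset.range u, f₁ i * fib (2*i) = csum f u :=
        Finset.sum_congr rfl (fun x hx => by
          simp only [Finset.mem_range] at hx; rw [evlow x hx])
      rw [e1, evu, evu1, show 2*(u+1) = 2*u+2 from by ring]
    have hS : S = csum f u + f u * fib (2*u) := by rw [← hsum, csum_succ]
    have hid := idOdd hm
    have hcancel : (f u - 1) * fib (2*u) + fib (2*u) = f u * fib (2*u) := by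
      have h1 : f u - 1 + 1 = f u := by omega
      calc (f u - 1) * fib (2*u) + fib (2*u) = (f u - 1 + 1) * fib (2*u) := by ring
      _ = f u * fib (2*u) := by rw [h1]
    rw [split1, A, B]
    omega

lemma run_exists : ∀ (l : List ℕ) (b u : ℕ) (f : ℕ → ℕ) (S : ℕ), CGInv b u f S →
    l.Chain' (fun a b => a + 2 ≤ b) → (∀ i ∈ l.head?, 2*u+2 ≤ i) →
    ∃ U g, CGInv b U g (S + (l.map fib).sum) ∧ u ≤ U ∧ (∀ x, x < u → g x = f x) ∧
      g u = (match l.head? with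
        | none => f u
        | some i => if i % 2 = 0 then f u else f u - 1) := by
  intro l
  induction l with
  | nil =>
    intro b u f S hInv _ _
    exact ⟨u, f, by simpa using hInv, le_rfl, fun _ _ => rfl, rfl⟩
  | cons i l IH =>
    intro b u f S hInv hchain hhead
    have hi : 2*u+2 ≤ i := hhead i rfl
    have hchain' : l.Chain' (fun a b => a + 2 ≤ b) := hchain.tail
    have hhead' : ∀ x ∈ l.head?, i + 2 ≤ x := by
      intro x hx
      exact List.isChain_cons.mp hchain |>.1 x hx
    rcases Nat.even_or_odd i with he | ho
    · -- even step
      obtain ⟨m, rfl⟩ := he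
      have hm : u < m := by omega
      obtain ⟨hInv1, heq1⟩ := stepEven hInv hm
      have hhead2 : ∀ x ∈ l.head?, 2*m+2 ≤ x := by
        intro x hx; have := hhead' x hx; omega
      obtain ⟨U, g, hInvU, hUm, hglow, _⟩ :=
        IH b m (Function.update f m 1) (S + fib (2*m)) hInv1 hchain' hhead2
      refine ⟨U, g, ?_, by omega, ?_, ?_⟩
      · rw [show m + m = 2*m from by ring, List.map_cons, List.sum_cons]
        rw [show S + fib (2*m) + (l.map fib).sum = S + (fib (2*m) + (l.map fib).sum) from by ring]
          at hInvU
        exact hInvU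
      · intro x hx
        rw [hglow x (by omega), heq1 x (by omega)]
      · have e1 : g u = Function.update f m 1 u := hglow u (by omega)
        rw [e1, heq1 u (by omega)]
        simp only [List.head?_cons]
        rw [if_pos (by omega)]
    · -- odd step
      obtain ⟨m, rfl⟩ := ho
      have hm : u < m := by omega
      obtain ⟨f₁, hInv1, heqlow, hequ⟩ := stepOdd hInv hm
      have hhead2 : ∀ x ∈ l.head?, 2*m+2 ≤ x := by
        intro x hx; have := hhead' x hx; omega
      obtain ⟨U, g, hInvU, hUm, hglow, _⟩ :=
        IH b m f₁ (S + fib (2*m+1)) hInv1 hchain' hhead2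
      refine ⟨U, g, ?_, by omega, ?_, ?_⟩
      · rw [List.map_cons, List.sum_cons]
        rw [show S + fib (2*m+1) + (l.map fib).sum
          = S + (fib (2*m+1) + (l.map fib).sum) from by ring] at hInvU
        exact hInvU
      · intro x hx
        rw [hglow x (by omega), heqlow x (by omega)]
      · have e1 : g u = f₁ u := hglow u (by omega)
        rw [e1, hequ]
        simp only [List.head?_cons]
        rw [if_neg (by omega)]




local instance : IsTrans ℕ fun a b ↦ b + 2 ≤ a where
  trans _a _b _c hba hcb := hcb.trans <| le_self_add.trans hba

lemma zrep_pairwise {l : List ℕ} (h : l.IsZeckendorfRep) :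
    l.Pairwise (fun a b => b + 2 ≤ a) ∧ ∀ a ∈ l, 2 ≤ a := by
  unfold List.IsZeckendorfRep at h
  rw [List.isChain_iff_pairwise, List.pairwise_append] at h
  refine ⟨h.1, fun a ha => ?_⟩
  have := h.2.2 a ha 0 (by simp)
  omega

lemma zrep_nodup {l : List ℕ} (h : l.IsZeckendorfRep) : l.Nodup :=
  (zrep_pairwise h).1.imp (fun {a b} (hab : b + 2 ≤ a) => (by omega : a ≠ b))

lemma zrep_tail {a : ℕ} {r : List ℕ} (h : (a :: r).IsZeckendorfRep) :
    r.IsZeckendorfRep := by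
  unfold List.IsZeckendorfRep at h ⊢
  rw [List.cons_append] at h
  exact h.tail

lemma zrep_shift {l : List ℕ} (h : l.IsZeckendorfRep) (e : ℕ) :
    (l.map (· + e)).IsZeckendorfRep := by
  unfold List.IsZeckendorfRep at h ⊢
  rw [List.isChain_append] at h ⊢
  obtain ⟨h1, h2, h3⟩ := h
  refine ⟨?_, h2, ?_⟩
  · rw [List.isChain_map]
    exact h1.imp (fun {x y} hxy => by simpa using by omega)
  · intro x hx y hy
    rw [List.getLast?_map] at hx
    simp only [Option.mem_map] at hx
    obtain ⟨a, ha, rfl⟩ := hx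
    have := h3 a ha y hy
    omega

lemma zrep_sum_lt {l : List ℕ} (h : l.IsZeckendorfRep) {n : ℕ}
    (hn : ∀ a ∈ (l ++ [0]).head?, a < n) : (l.map fib).sum < fib n :=
  h.sum_fib_lt hn

lemma shift_lt (e : ℕ) : ∀ (l' l : List ℕ), l.IsZeckendorfRep → l'.IsZeckendorfRep →
    (l.map fib).sum < (l'.map fib).sum →
    ((l.map (· + e)).map fib).sum < ((l'.map (· + e)).map fib).sum := by
  intro l'
  induction l' with
  | nil => intro l _ _ hlt; simp at hlt
  | cons a' r' IH =>
    intro l hl hl' hlt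
    cases l with
    | nil =>
      simp only [List.map_nil, List.sum_nil, List.map_cons, List.sum_cons]
      have ha2 : 2 ≤ a' := (zrep_pairwise hl').2 a' (by simp)
      have : 0 < fib (a' + e) := fib_pos.mpr (by omega)
      omega
    | cons a r =>
      have ha2 : 2 ≤ a := (zrep_pairwise hl).2 a (by simp)
      have hub : (List.map fib (a' :: r')).sum < fib (a' + 1) :=
        zrep_sum_lt hl' (by simp)
      have hlb : fib a ≤ (List.map fib (a :: r)).sum := by
        simp only [List.map_cons, List.sum_cons]; omega
      have haa' : a ≤ a' := by
        by_contra hc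
        push_neg at hc
        have : fib (a' + 1) ≤ fib a := fib_mono (by omega)
        omega
      rcases Nat.eq_or_lt_of_le haa' with rfl | hlt2
      · -- equal heads
        simp only [List.map_cons, List.sum_cons] at hlt ⊢
        have htail := IH r (zrep_tail hl) (zrep_tail hl') (by omega)
        omega
      · -- a < a'
        have hubs : ((List.map (· + e) (a :: r)).map fib).sum < fib (a + e + 1) := by
          refine zrep_sum_lt (zrep_shift hl e) ?_
          simp only [List.map_cons, List.cons_append, List.head?_cons]
          intro x hx
          simp only [Option.mem_some_iff] at hx
          omega
        have hmono : fib (a + e + 1) ≤ fib (a' + e) := fib_mono (by omega)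
        have hlbs : fib (a' + e) ≤ ((List.map (· + e) (a' :: r')).map fib).sum := by
          simp only [List.map_cons, List.sum_cons]; omega
        omega

def P (k t : ℕ) : ℕ := fib (2*k) + ((Nat.zeckendorf t).map (fun a => fib (a + 2*k))).sum

lemma P_mono (k : ℕ) : StrictMono (P k) := by
  intro t t' h
  have h1 : ((Nat.zeckendorf t).map fib).sum < ((Nat.zeckendorf t').map fib).sum := by
    rw [Nat.sum_zeckendorf_fib, Nat.sum_zeckendorf_fib]; exact h
  have := shift_lt (2*k) (Nat.zeckendorf t') (Nat.zeckendorf t)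
    (Nat.isZeckendorfRep_zeckendorf t) (Nat.isZeckendorfRep_zeckendorf t') h1
  unfold P
  rw [List.map_map, List.map_map] at this
  have e : (fib ∘ (· + 2*k)) = (fun a => fib (a + 2*k)) := rfl
  rw [e] at this
  omega

lemma isZeck_of_rep {l : List ℕ} (h : l.IsZeckendorfRep) :
    IsZeck ((l.map fib).sum) l.toFinset := by
  obtain ⟨hp, h2⟩ := zrep_pairwise h
  refine ⟨fun i hi => h2 i (List.mem_toFinset.mp hi), ?_, ?_⟩
  · intro i hi hcon
    have h1 := List.mem_toFinset.mp hi
    have h1' := List.mem_toFinset.mp hcon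
    have hsym : Symmetric (fun a b : ℕ => b + 2 ≤ a ∨ a + 2 ≤ b) := by
      intro x y hxy; tauto
    haveI : Std.Symm (fun a b : ℕ => b + 2 ≤ a ∨ a + 2 ≤ b) := ⟨fun _ _ h => hsym h⟩
    have := (hp.imp (S := fun a b : ℕ => b + 2 ≤ a ∨ a + 2 ≤ b) (fun hxy => Or.inl hxy)).forall h1' h1 (by omega)
    omega
  · exact (List.sum_toFinset _ (zrep_nodup h)).symm

lemma isZeck_sum_map {n : ℕ} {s : Finset ℕ} (h : IsZeck n s) (g : ℕ → ℕ) :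
    Nat.zeckendorf n = (s.sort (· ≤ ·)).reverse ∧
    ((Nat.zeckendorf n).map g).sum = ∑ i ∈ s, g i := by
  obtain ⟨h2, hadj, hsum⟩ := h
  set l : List ℕ := (s.sort (· ≤ ·)).reverse with hl
  have hmem : ∀ a, a ∈ l ↔ a ∈ s := by
    intro a; rw [hl, List.mem_reverse, Finset.mem_sort]
  have hnodup : l.Nodup := by
    rw [hl]; exact List.nodup_reverse.mpr (Finset.sort_nodup _ _)
  have htf : l.toFinset = s := by
    ext a; rw [List.mem_toFinset, hmem]
  have hrep : l.IsZeckendorfRep := by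
    unfold List.IsZeckendorfRep
    rw [List.isChain_append]
    refine ⟨?_, List.isChain_singleton 0, ?_⟩
    · refine List.Pairwise.isChain ?_
      have hs := (Finset.sortedLT_sort s).pairwise
      have hrev : l.Pairwise (fun a b => b < a) := by
        rw [hl, List.pairwise_reverse]
        exact hs
      refine hrev.imp_of_mem ?_
      intro a b ha hb hba
      have has : a ∈ s := (hmem a).mp ha
      have hbs : b ∈ s := (hmem b).mp hb
      rcases Nat.eq_or_lt_of_le (show b + 1 ≤ a by omega) with h | h
      · exfalso; exact hadj b hbs (by rw [h]; exact has)
      · omega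
    · intro x hx y hy
      simp only [List.head?_cons, Option.mem_some_iff] at hy
      subst hy
      have : x ∈ l := List.mem_of_mem_getLast? hx
      have := h2 x ((hmem x).mp this)
      omega
  have hsuml : (l.map fib).sum = n := by
    rw [← List.sum_toFinset _ hnodup, htf, hsum]
  have hz : Nat.zeckendorf n = l := by
    rw [← hsuml]; exact Nat.zeckendorf_sum_fib hrep
  refine ⟨hz, ?_⟩
  rw [hz, ← List.sum_toFinset _ hnodup, htf]

lemma P_rep {k : ℕ} (hk : 1 ≤ k) (t : ℕ) :
    ((Nat.zeckendorf t).map (· + 2*k) ++ [2*k]).IsZeckendorfRep := by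
  have hz := Nat.isZeckendorfRep_zeckendorf t
  have hsh := zrep_shift hz (2*k)
  unfold List.IsZeckendorfRep at hsh ⊢
  rw [List.append_assoc]
  rw [List.isChain_append] at hsh ⊢
  refine ⟨hsh.1, ?_, ?_⟩
  · refine List.isChain_cons_cons.mpr ⟨by omega, List.isChain_singleton 0⟩
  · intro x hx y hy
    simp only [List.singleton_append, List.head?_cons, Option.mem_some_iff] at hy
    subst hy
    rw [List.getLast?_map] at hx
    simp only [Option.mem_map] at hx
    obtain ⟨a, ha, rfl⟩ := hx
    have h2a := (zrep_pairwise hz).2 a (List.mem_of_mem_getLast? ha)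
    omega

lemma P_sum {k t : ℕ} :
    ((((Nat.zeckendorf t).map (· + 2*k) ++ [2*k])).map fib).sum = P k t := by
  rw [List.map_append, List.sum_append, List.map_map]
  unfold P
  have e : (fib ∘ (· + 2*k)) = (fun a => fib (a + 2*k)) := rfl
  rw [e]
  simp only [List.map_cons, List.map_nil, List.sum_cons, List.sum_nil]
  omega

lemma P_zeckmin {k : ℕ} (hk : 1 ≤ k) (t : ℕ) : ZeckMin k (P k t) := by
  set l := (Nat.zeckendorf t).map (· + 2*k) ++ [2*k] with hl
  have hrep := P_rep hk t
  have hz := isZeck_of_rep hrep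
  rw [P_sum] at hz
  refine ⟨l.toFinset, hz, ?_, ?_⟩
  · rw [List.mem_toFinset, hl]; simp
  · intro i hi
    rw [List.mem_toFinset, hl, List.mem_append] at hi
    rcases hi with hi | hi
    · simp only [List.mem_map] at hi
      obtain ⟨a, _, rfl⟩ := hi
      omega
    · simp only [List.mem_singleton] at hi
      omega

lemma P_surj {k n : ℕ} (hk : 1 ≤ k) (h : ZeckMin k n) : ∃ t, P k t = n := by
  obtain ⟨s, ⟨h2, hadj, hsum⟩, hmem, hmin⟩ := h
  have hge : ∀ a ∈ s.erase (2*k), 2*k + 2 ≤ a := by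
    intro a ha
    have h1 := Finset.mem_of_mem_erase ha
    have h3 := Finset.ne_of_mem_erase ha
    have h4 := hmin a h1
    have h5 : a ≠ 2*k + 1 := by
      intro hc; rw [hc] at h1; exact hadj (2*k) hmem h1
    omega
  set s' : Finset ℕ := (s.erase (2*k)).image (· - 2*k) with hs'
  have hinj : ∀ x ∈ s.erase (2*k), ∀ y ∈ s.erase (2*k), x - 2*k = y - 2*k → x = y := by
    intro x hx y hy hxy
    have := hge x hx; have := hge y hy
    omega
  have himg : ∀ b ∈ s', ∃ a ∈ s.erase (2*k), a - 2*k = b ∧ 2 ≤ b := by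
    intro b hb
    rw [hs', Finset.mem_image] at hb
    obtain ⟨a, ha, rfl⟩ := hb
    exact ⟨a, ha, rfl, by have := hge a ha; omega⟩
  have hzs' : IsZeck (∑ i ∈ s', fib i) s' := by
    refine ⟨fun i hi => (himg i hi).choose_spec.2.2, ?_, rfl⟩
    intro i hi hcon
    obtain ⟨a, ha, hab, _⟩ := himg i hi
    obtain ⟨a', ha', hab', _⟩ := himg (i+1) hcon
    have hga := hge a ha
    have hga' := hge a' ha'
    have : a' = a + 1 := by omega
    subst this
    exact hadj a (Finset.mem_of_mem_erase ha) (Finset.mem_of_mem_erase ha')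
  refine ⟨∑ i ∈ s', fib i, ?_⟩
  obtain ⟨_, hmap⟩ := isZeck_sum_map hzs' (fun a => fib (a + 2*k))
  unfold P
  rw [hmap, hs', Finset.sum_image hinj]
  have e1 : ∑ x ∈ s.erase (2*k), fib (x - 2*k + 2*k) = ∑ x ∈ s.erase (2*k), fib x := by
    refine Finset.sum_congr rfl (fun x hx => ?_)
    have := hge x hx
    congr 1
    omega
  rw [e1, Finset.add_sum_erase _ _ hmem, hsum]

lemma nth_zeckmin {k : ℕ} (hk : 1 ≤ k) (t : ℕ) : Nat.nth (ZeckMin k) t = P k t := by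
  classical
  have hcount : Nat.count (ZeckMin k) (P k t) = t := by
    rw [Nat.count_eq_card_filter_range]
    have he : (Finset.range (P k t)).filter (ZeckMin k) = (Finset.range t).image (P k) := by
      ext m
      simp only [Finset.mem_filter, Finset.mem_range, Finset.mem_image]
      constructor
      · rintro ⟨hlt, hzm⟩
        obtain ⟨u, rfl⟩ := P_surj hk hzm
        exact ⟨u, (P_mono k).lt_iff_lt.mp hlt, rfl⟩
      · rintro ⟨u, hu, rfl⟩
        exact ⟨P_mono k hu, P_zeckmin hk u⟩
    rw [he, Finset.card_image_of_injective _ (P_mono k).injective, Finset.card_range]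
  have := Nat.nth_count (p := ZeckMin k) (P_zeckmin hk t)
  rw [hcount] at this
  exact this

lemma exists_cg {k t : ℕ} (hk : 1 ≤ k) (ht : 1 ≤ t) :
    ∃ U g, CGInv k U g (P k t) ∧
      g k = (if ((Nat.zeckendorf t).getLast?.getD 0) % 2 = 0 then 1 else 0) := by
  have hz := Nat.isZeckendorfRep_zeckendorf t
  have hzne : Nat.zeckendorf t ≠ [] := by
    rw [Nat.zeckendorf_of_pos (show 0 < t by omega)]; simp
  obtain ⟨a₀, ha₀⟩ : ∃ a₀, (Nat.zeckendorf t).getLast? = some a₀ := by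
    cases h : (Nat.zeckendorf t).getLast?
    · exact absurd (List.getLast?_eq_none_iff.mp h) hzne
    · exact ⟨_, rfl⟩
  set f₀ : ℕ → ℕ := fun x => if x = k then 1 else 0 with hf₀
  have hInv0 : CGInv k k f₀ (fib (2*k)) := by
    refine ⟨le_rfl, by simp [hf₀], ?_, ?_, ?_, ?_, ?_⟩
    · intro i; rw [hf₀]; dsimp only; split <;> omega
    · intro i hi; rw [hf₀]; dsimp only; rw [if_neg (by omega)]
    · intro i hi; rw [hf₀]; dsimp only; rw [if_neg (by omega)]
    · intro i₁ i₂ _ h1 _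
      exfalso
      rw [hf₀] at h1; dsimp only at h1
      split at h1 <;> omega
    · rw [csum, Finset.sum_range_succ]
      have e1 : ∑ i ∈ Finset.range k, f₀ i * fib (2*i) = 0 := by
        refine Finset.sum_eq_zero (fun x hx => ?_)
        simp only [Finset.mem_range] at hx
        rw [hf₀]; dsimp only; rw [if_neg (by omega), zero_mul]
      rw [e1, hf₀]; simp
  set l : List ℕ := (Nat.zeckendorf t).reverse.map (· + 2*k) with hl
  have hzchain : (Nat.zeckendorf t).Chain' (fun a b => b + 2 ≤ a) := by
    have := hz
    unfold List.IsZeckendorfRep at this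
    exact (List.isChain_append.mp this).1
  have hchain : l.Chain' (fun a b => a + 2 ≤ b) := by
    rw [hl]; show List.IsChain _ _; rw [List.isChain_map]
    have : (Nat.zeckendorf t).reverse.Chain' (fun a b => a + 2 ≤ b) := by
      show List.IsChain _ _; rw [List.isChain_reverse]
      exact hzchain
    exact this.imp (fun {a b} hab => by omega)
  have hhead : ∀ i ∈ l.head?, 2*k+2 ≤ i := by
    intro i hi
    rw [hl, List.head?_map, List.head?_reverse, ha₀] at hi
    simp only [Option.map_some, Option.mem_some_iff] at hi
    have h2 := (zrep_pairwise hz).2 a₀ (List.mem_of_mem_getLast? (ha₀ ▸ rfl))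
    omega
  obtain ⟨U, g, hInvU, hkU, _, hgk⟩ := run_exists l k k f₀ (fib (2*k)) hInv0 hchain hhead
  have hsum : fib (2*k) + (l.map fib).sum = P k t := by
    rw [hl, List.map_map]
    have e : (fib ∘ (· + 2*k)) = (fun a => fib (a + 2*k)) := rfl
    rw [e, List.map_reverse, List.sum_reverse]
    rfl
  refine ⟨U, g, by rwa [hsum] at hInvU, ?_⟩
  have hlhead : l.head? = some (a₀ + 2*k) := by
    rw [hl, List.head?_map, List.head?_reverse, ha₀]
    rfl
  rw [hlhead] at hgk
  simp only at hgk
  rw [hgk, ha₀]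
  simp only [Option.getD_some]
  have hf₀k : f₀ k = 1 := by rw [hf₀]; simp
  rcases Nat.even_or_odd a₀ with he | ho
  · have he' := Nat.even_iff.mp he
    rw [if_pos (show (a₀ + 2*k) % 2 = 0 by omega), if_pos (show a₀ % 2 = 0 from he'), hf₀k]
  · have ho' := Nat.odd_iff.mp ho
    rw [if_neg (show ¬((a₀ + 2*k) % 2 = 0) by omega),
      if_neg (show ¬(a₀ % 2 = 0) by omega), hf₀k]

lemma cgInv_to_isCG {k U n : ℕ} {g : ℕ → ℕ} (hk : 1 ≤ k) (h : CGInv k U g n) :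
    ∃ c : ℕ →₀ ℕ, IsCG n c ∧ ⇑c = g := by
  obtain ⟨hbu, htop, hle2, hlow, hhigh, hsep, hsum⟩ := h
  have hmem : ∀ a, g a ≠ 0 → a ∈ Finset.range (U+1) := by
    intro a ha
    simp only [Finset.mem_range]
    by_contra hc
    exact ha (hhigh a (by omega))
  refine ⟨Finsupp.onFinset (Finset.range (U+1)) g hmem, ⟨?_, ?_, ?_, ?_⟩, rfl⟩
  · intro i; exact hle2 i
  · exact hlow 0 (by omega)
  · exact hsep
  · rw [Finsupp.sum_of_support_subset _ (Finsupp.support_onFinset_subset) _ (by simp)]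
    exact hsum.symm

theorem zeck_to_cg (k : ℕ) (hk : 1 ≤ k) (j : ℕ) (hj : 2 ≤ j) :
    ((∃ c : ℕ →₀ ℕ, IsCG (Nat.nth (ZeckMin k) (j - 1)) c ∧ 1 ≤ c k) ↔
        goldenLetter (j - 1) = true) ∧
    (∀ c : ℕ →₀ ℕ, IsCG (Nat.nth (ZeckMin k) (j - 1)) c →
        ∀ i : ℕ, c i ≠ 0 → Nat.fib (2 * k) ≤ Nat.fib (2 * i)) := by
  have ht : 1 ≤ j - 1 := by omega
  have hnth : Nat.nth (ZeckMin k) (j - 1) = P k (j - 1) := nth_zeckmin hk (j - 1)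
  obtain ⟨U, g, hInv, hgk⟩ := exists_cg hk ht
  obtain ⟨c₀, hc₀, hcoe⟩ := cgInv_to_isCG hk hInv
  rw [hnth]
  have hletter := letter_minZeck (j - 1) ht
  constructor
  · constructor
    · rintro ⟨c, hc, hck⟩
      have := isCG_unique hc hc₀
      subst this
      rw [hcoe] at hck
      rw [hletter, Nat.even_iff]
      by_contra hodd
      rw [if_neg hodd] at hgk
      omega
    · intro hl
      rw [hletter, Nat.even_iff] at hl
      rw [if_pos hl] at hgk
      refine ⟨c₀, hc₀, ?_⟩
      rw [show c₀ k = g k from by rw [← hcoe], hgk]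
  · intro c hc i hne
    have := isCG_unique hc hc₀
    subst this
    rw [hcoe] at hne
    have hik : k ≤ i := by
      by_contra hcon
      exact hne (hInv.hlow i (by omega))
    exact fib_mono (by omega)
end

section
/- Fix k ≥ 1. The set of positive integers n such that F_{2k} is the smallest summand in both the Zeckendorf decomposition and the Chung-Graham decomposition of n equals { nF_{2k} + ⌊(n−1)φ⌋ F_{2k+1} : n ∈ ℕ, n ≥ 1 }, where φ = (1+√5)/2. -/
open Finset Real
open scoped goldenRatio

local notation "gr" => goldenRatio

noncomputable def bb : ℝ := goldenRatio - 1

lemma bb_pos : 0 < bb := by have := one_lt_goldenRatio; simp only [bb]; linarith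
lemma bb_nonneg : 0 ≤ bb := bb_pos.le
lemma bb_lt_one : bb < 1 := by have := goldenRatio_lt_two; simp only [bb]; linarith
lemma gold_mul_bb : gr * bb = 1 := by
  have h := goldenRatio_sq; simp only [bb]; nlinarith
lemma bb_sq : bb^2 = 1 - bb := by
  have h := goldenRatio_sq; simp only [bb]; nlinarith
lemma gold_eq_bb : gr = 1 + bb := by simp only [bb]; ring
lemma abs_goldConj_eq : |ψ| = bb := by
  have h1 := goldenRatio_add_goldenConj
  have h2 : ψ = -bb := by simp only [bb]; linarith
  rw [h2, abs_neg, abs_of_pos bb_pos]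
lemma goldConj_eq_neg_bb : ψ = -bb := by
  have h1 := goldenRatio_add_goldenConj; simp only [bb]; linarith
lemma psi_pow_abs (i : ℕ) : |ψ^i| = bb^i := by rw [abs_pow, abs_goldConj_eq]
lemma psi_pow_even (i : ℕ) : ψ^(2*i) = bb^(2*i) := by
  rw [goldConj_eq_neg_bb, neg_pow, pow_mul, pow_mul]; simp
lemma bb_pow_pos (i : ℕ) : (0:ℝ) < bb^i := pow_pos bb_pos i
lemma bb_pow_le {m j : ℕ} (h : m ≤ j) : bb^j ≤ bb^m :=
  pow_le_pow_of_le_one bb_nonneg bb_lt_one.le h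
lemma phi_bb_bb (j : ℕ) : gr * bb^(j+2) = bb^(j+1) := by
  have h := gold_mul_bb
  calc gr * bb^(j+2) = (gr * bb) * bb^(j+1) := by ring
  _ = bb^(j+1) := by rw [h]; ring
lemma gold_sq_bb : gr^2 = 2 + bb := by rw [goldenRatio_sq, gold_eq_bb]; ring
lemma gold_sq_bb_sq : gr^2 * bb^2 = 1 := by
  have := gold_mul_bb
  calc gr^2*bb^2 = (gr*bb)*(gr*bb) := by ring
  _ = 1 := by rw [this]; ring

lemma zsum_lt : ∀ (N : ℕ) (s : Finset ℕ) (m : ℕ), s.card = N →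
    (∀ i ∈ s, i+1 ∉ s) → (∀ i ∈ s, m ≤ i) → ∑ i ∈ s, bb^i < gr * bb^m := by
  intro N
  induction N with
  | zero => intro s m hcard _ _
            rw [Finset.card_eq_zero] at hcard; subst hcard
            simpa using mul_pos goldenRatio_pos (bb_pow_pos m)
  | succ n ih =>
    intro s m hcard hadj hm
    have hne : s.Nonempty := Finset.card_pos.mp (by omega)
    set j := s.min' hne with hj
    have hjs : j ∈ s := s.min'_mem hne
    have hrest : ∀ i ∈ s.erase j, j + 2 ≤ i := by
      intro i hi
      have hi1 : i ∈ s := Finset.mem_of_mem_erase hi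
      have hij : i ≠ j := Finset.ne_of_mem_erase hi
      have h1 : j ≤ i := s.min'_le i hi1
      have : i ≠ j + 1 := by rintro rfl; exact hadj j hjs hi1
      omega
    have hcard' : (s.erase j).card = n := by
      rw [Finset.card_erase_of_mem hjs]; omega
    have htail := ih (s.erase j) (j+2) hcard'
      (fun i hi => fun hmem => hadj i (Finset.mem_of_mem_erase hi) (Finset.mem_of_mem_erase hmem))
      hrest
    have hsum : ∑ i ∈ s, bb^i = bb^j + ∑ i ∈ s.erase j, bb^i :=
      (Finset.add_sum_erase s (fun i => bb^i) hjs).symm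
    have hjm : m ≤ j := hm j hjs
    calc ∑ i ∈ s, bb^i = bb^j + ∑ i ∈ s.erase j, bb^i := hsum
      _ < bb^j + gr * bb^(j+2) := by linarith
      _ = bb^j + bb^(j+1) := by rw [phi_bb_bb]
      _ = (1 + bb) * bb^j := by ring
      _ = gr * bb^j := by rw [gold_eq_bb]
      _ ≤ gr * bb^m := by
          have := bb_pow_le hjm
          nlinarith [goldenRatio_pos]

lemma zsum_abs_lt (s : Finset ℕ) (m : ℕ)
    (hadj : ∀ i ∈ s, i+1 ∉ s) (hm : ∀ i ∈ s, m ≤ i) : |∑ i ∈ s, ψ^i| < gr * bb^m := by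
  calc |∑ i ∈ s, ψ^i| ≤ ∑ i ∈ s, |ψ^i| := Finset.abs_sum_le_sum_abs _ _
    _ = ∑ i ∈ s, bb^i := Finset.sum_congr rfl (fun i _ => psi_pow_abs i)
    _ < gr * bb^m := zsum_lt s.card s m rfl hadj hm

lemma cg_bound_s16 : ∀ (N : ℕ) (s : Finset ℕ) (c : ℕ → ℕ), s.card = N → (∀ i ∈ s, c i ≤ 2) →
    (∀ i₁ ∈ s, ∀ i₂ ∈ s, i₁ < i₂ → c i₁ = 2 → c i₂ = 2 → ∃ l, i₁ < l ∧ l < i₂ ∧ c l = 0) →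
    (∀ (hne : s.Nonempty), ∑ i ∈ s, (c i : ℝ) * bb^(2*i) < gr^2 * bb^(2 * s.min' hne)) ∧
    (∀ a, (∀ i ∈ s, a ≤ i) → (∀ j ∈ s, c j = 2 → ∃ l, a ≤ l ∧ l < j ∧ c l = 0) →
      ∑ i ∈ s, (c i : ℝ) * bb^(2*i) < gr * bb^(2*a)) := by
  intro N
  induction N with
  | zero =>
    intro s c hcard _ _
    rw [Finset.card_eq_zero] at hcard; subst hcard
    constructor
    · rintro ⟨x, hx⟩; exact absurd hx (Finset.notMem_empty x)
    · intro a _ _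
      simpa using mul_pos goldenRatio_pos (bb_pow_pos (2*a))
  | succ n ih =>
    intro s c hcard hc2 hsep
    have hne : s.Nonempty := Finset.card_pos.mp (by omega)
    have hjs : s.min' hne ∈ s := s.min'_mem hne
    set j := s.min' hne with hj
    have hcard' : (s.erase j).card = n := by rw [Finset.card_erase_of_mem hjs]; omega
    have hrest : ∀ i ∈ s.erase j, j + 1 ≤ i := by
      intro i hi
      have h1 : j ≤ i := s.min'_le i (Finset.mem_of_mem_erase hi)
      have h2 : i ≠ j := Finset.ne_of_mem_erase hi
      omega
    have hc2' : ∀ i ∈ s.erase j, c i ≤ 2 := fun i hi => hc2 i (Finset.mem_of_mem_erase hi)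
    have hsep' : ∀ i₁ ∈ s.erase j, ∀ i₂ ∈ s.erase j, i₁ < i₂ → c i₁ = 2 → c i₂ = 2 →
        ∃ l, i₁ < l ∧ l < i₂ ∧ c l = 0 := fun i₁ h₁ i₂ h₂ =>
      hsep i₁ (Finset.mem_of_mem_erase h₁) i₂ (Finset.mem_of_mem_erase h₂)
    have ihE := ih (s.erase j) c hcard' hc2' hsep'
    have hsum : ∑ i ∈ s, (c i : ℝ) * bb^(2*i)
        = (c j : ℝ) * bb^(2*j) + ∑ i ∈ s.erase j, (c i : ℝ) * bb^(2*i) :=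
      (Finset.add_sum_erase s _ hjs).symm
    -- tail bound from part A of erase, relative to j+1
    have htailA : ∑ i ∈ s.erase j, (c i : ℝ) * bb^(2*i) < gr^2 * bb^(2*(j+1)) := by
      rcases Finset.eq_empty_or_nonempty (s.erase j) with he | hne'
      · rw [he]; simpa using mul_pos (by positivity) (bb_pow_pos (2*(j+1)))
      · refine lt_of_lt_of_le (ihE.1 hne') ?_
        have : j + 1 ≤ (s.erase j).min' hne' := hrest _ ((s.erase j).min'_mem hne')
        have hb := bb_pow_le (Nat.mul_le_mul_left 2 this)
        nlinarith [sq_nonneg gr, goldenRatio_pos]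
    have hAA : gr^2 * bb^(2*(j+1)) = bb^(2*j) := by
      have : bb^(2*(j+1)) = bb^2 * bb^(2*j) := by ring_nf
      rw [this, ← mul_assoc, gold_sq_bb_sq, one_mul]
    -- Part A
    have partA : ∑ i ∈ s, (c i : ℝ) * bb^(2*i) < gr^2 * bb^(2*j) := by
      rcases Nat.lt_or_ge (c j) 2 with hcj | hcj
      · -- c j ≤ 1
        have h1 : (c j : ℝ) ≤ 1 := by exact_mod_cast Nat.lt_succ_iff.mp hcj
        rw [hAA] at htailA
        rw [hsum]
        have h2 : (2:ℝ) < gr^2 := by rw [gold_sq_bb]; nlinarith [bb_pos]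
        have h3 := bb_pow_pos (2*j)
        nlinarith
      · -- c j = 2
        have hcj2 : c j = 2 := le_antisymm (hc2 j hjs) hcj
        have htailB : ∑ i ∈ s.erase j, (c i : ℝ) * bb^(2*i) < gr * bb^(2*(j+1)) := by
          refine ihE.2 (j+1) hrest ?_
          intro j₂ hj₂ hcj₂
          obtain ⟨l, hl1, hl2, hl3⟩ := hsep j hjs j₂ (Finset.mem_of_mem_erase hj₂)
            (by have := hrest j₂ hj₂; omega) hcj2 hcj₂
          exact ⟨l, by omega, hl2, hl3⟩
        have hgb : gr * bb^(2*(j+1)) = bb * bb^(2*j) := by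
          have : (2*(j+1)) = (2*j+1) + 1 := by ring
          rw [this]
          have h2 : gr * bb ^ (2*j+1+1) = bb ^ (2*j + 1) := phi_bb_bb (2*j)
          rw [h2]; ring
        rw [hsum, hcj2, gold_sq_bb]
        rw [hgb] at htailB
        have := bb_pow_pos (2*j)
        push_cast
        nlinarith
    refine ⟨fun hne2 => by rwa [show s.min' hne2 = j from rfl], ?_⟩
    -- Part B
    intro a ha hz
    have haj : a ≤ j := ha j hjs
    rcases Nat.lt_or_ge a j with hlt | hge
    · -- a < j : use partA
      have h1 : gr^2 * bb^(2*j) ≤ gr^2 * bb^(2*(a+1)) := by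
        have := bb_pow_le (Nat.mul_le_mul_left 2 (by omega : a + 1 ≤ j))
        nlinarith [sq_nonneg gr]
      have h2 : gr^2 * bb^(2*(a+1)) = bb^(2*a) := by
        have : bb^(2*(a+1)) = bb^2 * bb^(2*a) := by ring_nf
        rw [this, ← mul_assoc, gold_sq_bb_sq, one_mul]
      have h3 : bb^(2*a) < gr * bb^(2*a) := by
        have := bb_pow_pos (2*a); nlinarith [one_lt_goldenRatio]
      linarith [partA]
    · -- a = j
      have haj' : a = j := le_antisymm haj hge
      subst haj'
      rcases Nat.lt_or_ge (c j) 2 with hca | hca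
      · rcases Nat.eq_zero_or_pos (c j) with hca0 | hca1
        · -- c j = 0
          have h2 : gr^2 * bb^(2*(j+1)) = bb^(2*j) := by
            have : bb^(2*(j+1)) = bb^2 * bb^(2*j) := by ring_nf
            rw [this, ← mul_assoc, gold_sq_bb_sq, one_mul]
          have h3 : bb^(2*j) < gr * bb^(2*j) := by
            have := bb_pow_pos (2*j); nlinarith [one_lt_goldenRatio]
          rw [hsum, hca0]
          push_cast
          rw [h2] at htailA
          linarith
        · -- c j = 1
          have hca1' : c j = 1 := by omega
          have htailB : ∑ i ∈ s.erase j, (c i : ℝ) * bb^(2*i) < gr * bb^(2*(j+1)) := by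
            refine ihE.2 (j+1) hrest ?_
            intro j₂ hj₂ hcj₂
            obtain ⟨l, hl1, hl2, hl3⟩ := hz j₂ (Finset.mem_of_mem_erase hj₂) hcj₂
            have : l ≠ j := by rintro rfl; rw [hl3] at hca1'; omega
            exact ⟨l, by omega, hl2, hl3⟩
          have hgb : gr * bb^(2*(j+1)) = bb * bb^(2*j) := by
            have heq : (2*(j+1)) = (2*j+1) + 1 := by ring
            rw [heq]
            have h2 : gr * bb ^ (2*j+1+1) = bb ^ (2*j + 1) := phi_bb_bb (2*j)
            rw [h2]; ring
          rw [hsum, hca1', gold_eq_bb]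
          rw [hgb] at htailB
          push_cast
          nlinarith [bb_pow_pos (2*j)]
      · -- c j = 2 : contradiction with hz
        have hca2 : c j = 2 := le_antisymm (hc2 j hjs) hca
        obtain ⟨l, hl1, hl2, _⟩ := hz j hjs hca2
        omega

lemma zeck_exists : ∀ n : ℕ, ∃ s : Finset ℕ, IsZeck n s ∧ ∀ i ∈ s, Nat.fib i ≤ n := by
  intro n
  induction n using Nat.strong_induction_on with
  | _ n ih =>
  rcases Nat.eq_zero_or_pos n with rfl | hn
  · exact ⟨∅, ⟨by simp, by simp, by simp⟩, by simp⟩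
  · have hfj0 : Nat.fib (Nat.greatestFib n) ≤ n := Nat.fib_greatestFib_le n
    have hlt0 : n < Nat.fib (Nat.greatestFib n + 1) := Nat.lt_fib_greatestFib_add_one n
    have hj2 : 2 ≤ Nat.greatestFib n := Nat.le_greatestFib.mpr (by rw [Nat.fib_two]; omega)
    obtain ⟨j', hj⟩ : ∃ j', Nat.greatestFib n = j' + 2 := ⟨Nat.greatestFib n - 2, by omega⟩
    rw [hj] at hfj0 hlt0
    have hfj : Nat.fib (j'+2) ≤ n := hfj0
    have hlt : n < Nat.fib (j'+3) := hlt0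
    have hfibpos : 0 < Nat.fib (j'+2) := Nat.fib_pos.mpr (by omega)
    set r := n - Nat.fib (j'+2) with hr
    have hrn : r < n := by omega
    obtain ⟨s', ⟨hs'2, hs'adj, hs'sum⟩, hs'le⟩ := ih r hrn
    have hrlt : r < Nat.fib (j'+1) := by
      have h : Nat.fib (j'+3) = Nat.fib (j'+1) + Nat.fib (j'+2) := Nat.fib_add_two
      omega
    have hsmall : ∀ i ∈ s', i ≤ j' := by
      intro i hi
      by_contra hgt
      have h1 : Nat.fib (j'+1) ≤ Nat.fib i := Nat.fib_mono (by omega)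
      have := hs'le i hi
      omega
    have hnotmem : j' + 2 ∉ s' := fun h => by have := hsmall _ h; omega
    refine ⟨insert (j'+2) s', ⟨?_, ?_, ?_⟩, ?_⟩
    · intro i hi
      rcases Finset.mem_insert.mp hi with rfl | hi'
      · omega
      · exact hs'2 i hi'
    · intro i hi
      rcases Finset.mem_insert.mp hi with rfl | hi'
      · intro hmem
        rcases Finset.mem_insert.mp hmem with h | h
        · omega
        · have := hsmall _ h; omega
      · intro hmem
        rcases Finset.mem_insert.mp hmem with h | h
        · have := hsmall _ hi'; omega
        · exact hs'adj i hi' h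
    · rw [Finset.sum_insert hnotmem, ← hs'sum]; omega
    · intro i hi
      rcases Finset.mem_insert.mp hi with rfl | hi'
      · exact hfj
      · exact le_trans (hs'le i hi') (by omega)

lemma two_le_fib_two_mul (n : ℕ) : n + 1 ≤ Nat.fib (2*n+2) := by
  induction n with
  | zero => simp
  | succ m ih =>
    have h1 : Nat.fib (2*(m+1)+2) = Nat.fib (2*m+2) + Nat.fib (2*m+3) := by
      have : 2*(m+1)+2 = (2*m+2) + 2 := by ring
      rw [this, Nat.fib_add_two]
    have h2 : 0 < Nat.fib (2*m+3) := Nat.fib_pos.mpr (by omega)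
    omega

lemma cassini (n : ℕ) : (Nat.fib (n+1) : ℤ)^2 = Nat.fib n * Nat.fib (n+2) + (-1)^n := by
  induction n with
  | zero => simp
  | succ m ih =>
    have h3 : (Nat.fib (m+3) : ℤ) = Nat.fib (m+1) + Nat.fib (m+2) := by
      rw [show m+3 = (m+1)+2 from rfl, Nat.fib_add_two]; push_cast; ring
    have h2 : (Nat.fib (m+2) : ℤ) = Nat.fib m + Nat.fib (m+1) := by
      rw [Nat.fib_add_two]; push_cast; ring
    have key : (Nat.fib (m+2) : ℤ)^2 = Nat.fib (m+1) * Nat.fib (m+3) + (-1)^(m+1) := by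
      rw [h2] at ih
      rw [h3, h2, pow_succ]
      linear_combination -ih
    exact key

lemma cg_exists_aux : ∀ (J : ℕ), ∀ n, n < Nat.fib (2*J+2) → ∃ c : ℕ →₀ ℕ,
    (∀ i, c i ≤ 2) ∧
    (∀ i₁ i₂, i₁ < i₂ → c i₁ = 2 → c i₂ = 2 → ∃ l, i₁ < l ∧ l < i₂ ∧ c l = 0) ∧
    (c.sum (fun i a => a * Nat.fib (2*i)) = n) ∧
    (∀ i ∈ c.support, 1 ≤ i ∧ i ≤ J) ∧
    (n < Nat.fib (2*J+1) → ∀ a, c a = 2 → ∃ l, a < l ∧ l ≤ J ∧ c l = 0) := by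
  intro J
  induction J with
  | zero =>
    intro n hn
    interval_cases n
    exact ⟨0, by simp, by simp, by simp, by simp, by simp⟩
  | succ J ih =>
    intro n hn
    have hf4 : Nat.fib (2*J+4) = Nat.fib (2*J+2) + Nat.fib (2*J+3) := Nat.fib_add_two
    have hf3 : Nat.fib (2*J+3) = Nat.fib (2*J+1) + Nat.fib (2*J+2) := Nat.fib_add_two
    have hn' : n < Nat.fib (2*J+4) := by
      have : 2*(J+1)+2 = 2*J+4 := by ring
      rwa [this] at hn
    rcases Nat.lt_or_ge n (Nat.fib (2*J+2)) with h1 | h1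
    · -- reuse IH rep
      obtain ⟨c, hc2, hsep, hsum, hsupp, hcond⟩ := ih n h1
      refine ⟨c, hc2, hsep, hsum, ?_, ?_⟩
      · intro i hi; have := hsupp i hi; omega
      · intro _ a ha2
        rcases Nat.lt_or_ge n (Nat.fib (2*J+1)) with h2 | h2
        · obtain ⟨l, hl1, hl2, hl3⟩ := hcond h2 a ha2
          exact ⟨l, hl1, by omega, hl3⟩
        · have haJ : a ≤ J := by
            have : a ∈ c.support := Finsupp.mem_support_iff.mpr (by omega)
            exact (hsupp a this).2
          have hJ1 : c (J+1) = 0 := by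
            by_contra h
            have : J+1 ∈ c.support := Finsupp.mem_support_iff.mpr h
            have := (hsupp _ this).2; omega
          exact ⟨J+1, by omega, le_refl _, hJ1⟩
    rcases Nat.lt_or_ge n (2 * Nat.fib (2*J+2)) with h2 | h2
    · -- digit 1 at J+1
      set r := n - Nat.fib (2*J+2) with hr
      have hrlt : r < Nat.fib (2*J+2) := by omega
      obtain ⟨c', hc2, hsep, hsum, hsupp, hcond⟩ := ih r hrlt
      have hJ1 : c' (J+1) = 0 := by
        by_contra h
        have := (hsupp _ (Finsupp.mem_support_iff.mpr h)).2; omega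
      set c : ℕ →₀ ℕ := c' + Finsupp.single (J+1) 1 with hc
      have happ : ∀ i, c i = c' i + if J+1 = i then 1 else 0 := by
        intro i; rw [hc, Finsupp.add_apply, Finsupp.single_apply]
      have happ' : ∀ i, i ≠ J+1 → c i = c' i := by
        intro i hi; rw [happ i, if_neg (by omega)]; omega
      have happJ : c (J+1) = 1 := by rw [happ, if_pos rfl, hJ1]
      have hsuppc : ∀ i ∈ c.support, 1 ≤ i ∧ i ≤ J+1 := by
        intro i hi
        rcases eq_or_ne i (J+1) with rfl | hne
        · omega
        · have : c' i ≠ 0 := by rw [← happ' i hne]; exact Finsupp.mem_support_iff.mp hi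
          have := hsupp i (Finsupp.mem_support_iff.mpr this); omega
      refine ⟨c, ?_, ?_, ?_, hsuppc, ?_⟩
      · intro i
        rcases eq_or_ne i (J+1) with rfl | hne
        · omega
        · rw [happ' i hne]; exact hc2 i
      · intro i₁ i₂ hlt h₁ h₂
        have hne₁ : i₁ ≠ J+1 := by intro h; rw [h, happJ] at h₁; omega
        have hne₂ : i₂ ≠ J+1 := by intro h; rw [h, happJ] at h₂; omega
        rw [happ' _ hne₁] at h₁; rw [happ' _ hne₂] at h₂
        obtain ⟨l, hl1, hl2, hl3⟩ := hsep i₁ i₂ hlt h₁ h₂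
        have hli : i₂ ≤ J := (hsupp i₂ (Finsupp.mem_support_iff.mpr (by omega))).2
        refine ⟨l, hl1, hl2, ?_⟩
        rw [happ' l (by omega)]; exact hl3
      · rw [hc, Finsupp.sum_add_index' (fun i => by simp) (fun i a b => by ring)]
        rw [hsum, Finsupp.sum_single_index (by simp)]
        have : 2*(J+1) = 2*J+2 := by ring
        rw [this]; omega
      · intro h3 a ha2
        rw [show 2*(J+1)+1 = 2*J+3 from by ring] at h3
        have hrsmall : r < Nat.fib (2*J+1) := by omega
        have hane : a ≠ J+1 := by intro h; rw [h, happJ] at ha2; omega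
        rw [happ' a hane] at ha2
        obtain ⟨l, hl1, hl2, hl3⟩ := hcond hrsmall a ha2
        exact ⟨l, hl1, by omega, by rw [happ' l (by omega)]; exact hl3⟩
    · -- digit 2 at J+1
      set r := n - 2 * Nat.fib (2*J+2) with hr
      have hrlt : r < Nat.fib (2*J+1) := by omega
      have hrlt2 : r < Nat.fib (2*J+2) := by
        have : Nat.fib (2*J+1) ≤ Nat.fib (2*J+2) := Nat.fib_mono (by omega)
        omega
      obtain ⟨c', hc2, hsep, hsum, hsupp, hcond⟩ := ih r hrlt2
      have hcond' := hcond hrlt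
      have hJ1 : c' (J+1) = 0 := by
        by_contra h
        have := (hsupp _ (Finsupp.mem_support_iff.mpr h)).2; omega
      set c : ℕ →₀ ℕ := c' + Finsupp.single (J+1) 2 with hc
      have happ : ∀ i, c i = c' i + if J+1 = i then 2 else 0 := by
        intro i; rw [hc, Finsupp.add_apply, Finsupp.single_apply]
      have happ' : ∀ i, i ≠ J+1 → c i = c' i := by
        intro i hi; rw [happ i, if_neg (by omega)]; omega
      have happJ : c (J+1) = 2 := by rw [happ, if_pos rfl, hJ1]
      have hsuppc : ∀ i ∈ c.support, 1 ≤ i ∧ i ≤ J+1 := by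
        intro i hi
        rcases eq_or_ne i (J+1) with rfl | hne
        · omega
        · have : c' i ≠ 0 := by rw [← happ' i hne]; exact Finsupp.mem_support_iff.mp hi
          have := hsupp i (Finsupp.mem_support_iff.mpr this); omega
      refine ⟨c, ?_, ?_, ?_, hsuppc, ?_⟩
      · intro i
        rcases eq_or_ne i (J+1) with rfl | hne
        · omega
        · rw [happ' i hne]; exact hc2 i
      · intro i₁ i₂ hlt h₁ h₂
        rcases eq_or_ne i₂ (J+1) with rfl | hne₂
        · have hne₁ : i₁ ≠ J+1 := by omega
          rw [happ' _ hne₁] at h₁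
          obtain ⟨l, hl1, hl2, hl3⟩ := hcond' i₁ h₁
          exact ⟨l, hl1, by omega, by rw [happ' l (by omega)]; exact hl3⟩
        · have hne₁ : i₁ ≠ J+1 := by
            intro h; subst h
            have : i₂ ∈ c'.support := Finsupp.mem_support_iff.mpr (by rw [← happ' _ hne₂]; omega)
            have := (hsupp _ this).2; omega
          rw [happ' _ hne₁] at h₁; rw [happ' _ hne₂] at h₂
          obtain ⟨l, hl1, hl2, hl3⟩ := hsep i₁ i₂ hlt h₁ h₂
          have hli : i₂ ≤ J := (hsupp i₂ (Finsupp.mem_support_iff.mpr (by omega))).2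
          exact ⟨l, hl1, hl2, by rw [happ' l (by omega)]; exact hl3⟩
      · rw [hc, Finsupp.sum_add_index' (fun i => by simp) (fun i a b => by ring)]
        rw [hsum, Finsupp.sum_single_index (by simp)]
        have : 2*(J+1) = 2*J+2 := by ring
        rw [this]; omega
      · intro h3 _ _
        rw [show 2*(J+1)+1 = 2*J+3 from by ring] at h3
        exfalso
        have : Nat.fib (2*J+3) ≤ 2 * Nat.fib (2*J+2) := by
          have : Nat.fib (2*J+1) ≤ Nat.fib (2*J+2) := Nat.fib_mono (by omega)
          omega
        omega

lemma fibA (i : ℕ) : (Nat.fib (i+1) : ℝ) = gr * Nat.fib i + ψ^i := by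
  have := fib_succ_sub_goldenRatio_mul_fib i; linarith

lemma zeck_real {n : ℕ} {s : Finset ℕ} (hz : IsZeck n s) :
    ((∑ i ∈ s, Nat.fib (i+1) : ℕ) : ℝ) = gr * n + ∑ i ∈ s, ψ^i := by
  have h := hz.2.2
  push_cast
  rw [h]
  push_cast
  rw [Finset.mul_sum, ← Finset.sum_add_distrib]
  exact Finset.sum_congr rfl (fun i _ => fibA i)

lemma cg_real {n : ℕ} {c : ℕ →₀ ℕ} (hcg : IsCG n c) :
    ((∑ i ∈ c.support, (c i) * Nat.fib (2*i+1) : ℕ) : ℝ)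
      = gr * n + ∑ i ∈ c.support, (c i : ℝ) * bb^(2*i) := by
  have h := hcg.2.2.2
  rw [Finsupp.sum] at h
  push_cast
  rw [h]
  push_cast
  rw [Finset.mul_sum, ← Finset.sum_add_distrib]
  refine Finset.sum_congr rfl (fun i _ => ?_)
  rw [fibA (2*i), ← psi_pow_even i]
  ring

lemma nat_eq_of_dist_lt {a b : ℕ} (h : |(a:ℝ) - b| < 1) : a = b := by
  rw [abs_lt] at h
  obtain ⟨h1, h2⟩ := h
  have ha : (a:ℝ) < b + 1 := by linarith
  have hb : (b:ℝ) < a + 1 := by linarith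
  have ha' : a < b + 1 := by exact_mod_cast ha
  have hb' : b < a + 1 := by exact_mod_cast hb
  omega

lemma cg_bound_ge (s : Finset ℕ) (c : ℕ → ℕ) (a : ℕ)
    (hc2 : ∀ i ∈ s, c i ≤ 2)
    (hsep : ∀ i₁ ∈ s, ∀ i₂ ∈ s, i₁ < i₂ → c i₁ = 2 → c i₂ = 2 → ∃ l, i₁ < l ∧ l < i₂ ∧ c l = 0)
    (ha : ∀ i ∈ s, a ≤ i) :
    ∑ i ∈ s, (c i : ℝ) * bb^(2*i) < gr^2 * bb^(2*a) := by
  rcases Finset.eq_empty_or_nonempty s with rfl | hne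
  · simpa using mul_pos (by positivity : (0:ℝ) < gr^2) (bb_pow_pos (2*a))
  · refine lt_of_lt_of_le ((cg_bound_s16 s.card s c rfl hc2 hsep).1 hne) ?_
    have h1 : a ≤ s.min' hne := ha _ (s.min'_mem hne)
    have h2 := bb_pow_le (Nat.mul_le_mul_left 2 h1)
    nlinarith [sq_nonneg gr]

lemma psi_pow_odd (i : ℕ) : ψ^(2*i+1) = -bb^(2*i+1) := by
  rw [goldConj_eq_neg_bb]
  exact Odd.neg_pow ⟨i, by ring⟩ bb

lemma bb_pow_succ_lt (j : ℕ) : bb^(j+1) < bb^j := by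
  have := bb_pow_pos j
  calc bb^(j+1) = bb * bb^j := by ring
  _ < 1 * bb^j := by nlinarith [bb_lt_one]
  _ = bb^j := by ring

lemma gr_bb_sq : gr * bb^2 = bb := by
  have := phi_bb_bb 0; simpa using this

set_option maxHeartbeats 2000000 in
lemma incl1 (k n : ℕ) (hk : 1 ≤ k)
    (s : Finset ℕ) (hz : IsZeck n s) (h2k : 2*k ∈ s) (hmin : ∀ i ∈ s, 2*k ≤ i)
    (c : ℕ →₀ ℕ) (hcg : IsCG n c) (hck : 1 ≤ c k) (hlow : ∀ i < k, c i = 0) :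
    ∃ m : ℕ, 1 ≤ m ∧ n = m * Nat.fib (2*k) + ⌊((m:ℝ)-1) * gr⌋₊ * Nat.fib (2*k+1) := by
  have hfibpos : 0 < Nat.fib (2*k) := Nat.fib_pos.mpr (by omega)
  have hn1 : 1 ≤ n := by
    rw [hz.2.2]
    calc 1 ≤ Nat.fib (2*k) := hfibpos
    _ ≤ ∑ i ∈ s, Nat.fib i := Finset.single_le_sum (fun i _ => Nat.zero_le _) h2k
  -- Zeckendorf side real quantities
  obtain ⟨L₁, hL₁⟩ : ∃ L : ℕ, L = ∑ i ∈ s, Nat.fib (i+1) := ⟨_, rfl⟩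
  obtain ⟨D, hD⟩ : ∃ x : ℝ, x = ∑ i ∈ s, ψ^i := ⟨_, rfl⟩
  have hZr : (L₁:ℝ) = gr * n + D := by rw [hL₁, hD]; exact zeck_real hz
  have herase : ∀ i ∈ s.erase (2*k), 2*k+2 ≤ i := by
    intro i hi
    have h1 : i ∈ s := Finset.mem_of_mem_erase hi
    have h2 : i ≠ 2*k := Finset.ne_of_mem_erase hi
    have h3 : i ≠ 2*k+1 := by rintro rfl; exact hz.2.1 (2*k) h2k (by simpa using h1)
    have := hmin i h1; omega
  have hDdec : D = ψ^(2*k) + ∑ i ∈ s.erase (2*k), ψ^i := by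
    rw [hD]; exact (Finset.add_sum_erase s (fun i => ψ^i) h2k).symm
  have hT : |∑ i ∈ s.erase (2*k), ψ^i| < bb^(2*k+1) := by
    have h := zsum_abs_lt (s.erase (2*k)) (2*k+2)
      (fun i hi hmem => hz.2.1 i (Finset.mem_of_mem_erase hi) (Finset.mem_of_mem_erase hmem))
      herase
    rwa [phi_bb_bb (2*k)] at h
  rw [abs_lt] at hT
  have hpsi2k : ψ^(2*k) = bb^(2*k) := psi_pow_even k
  have hDpos : 0 < D := by
    rw [hDdec, hpsi2k]
    have h1 : bb^(2*k+1) < bb^(2*k) := bb_pow_succ_lt (2*k)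
    linarith [hT.1]
  have hDub : D < gr * bb^(2*k) := by
    rw [hDdec, hpsi2k, gold_eq_bb]
    have : (1 + bb) * bb^(2*k) = bb^(2*k) + bb^(2*k+1) := by ring
    rw [this]
    linarith [hT.2]
  have hbb2k_le : bb^(2*k) ≤ bb^2 := bb_pow_le (by omega)
  have hDlt1 : D < 1 := by
    have h2 : gr * bb^(2*k) ≤ gr * bb^2 := by nlinarith [goldenRatio_pos]
    have := gr_bb_sq
    linarith [bb_lt_one]
  -- CG side
  obtain ⟨L₂, hL₂⟩ : ∃ L : ℕ, L = ∑ i ∈ c.support, (c i) * Nat.fib (2*i+1) := ⟨_, rfl⟩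
  obtain ⟨D', hD'⟩ : ∃ x : ℝ, x = ∑ i ∈ c.support, (c i : ℝ) * bb^(2*i) := ⟨_, rfl⟩
  have hCr : (L₂:ℝ) = gr * n + D' := by rw [hL₂, hD']; exact cg_real hcg
  have hksupp : k ∈ c.support := Finsupp.mem_support_iff.mpr (by omega)
  have hD'lb : bb^(2*k) ≤ D' := by
    rw [hD']
    have h1 : bb^(2*k) ≤ (c k : ℝ) * bb^(2*k) := by
      have : (1:ℝ) ≤ (c k : ℝ) := by exact_mod_cast hck
      nlinarith [bb_pow_pos (2*k)]
    calc bb^(2*k) ≤ (c k : ℝ) * bb^(2*k) := h1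
    _ ≤ _ := Finset.single_le_sum (f := fun i => (c i : ℝ) * bb^(2*i))
        (fun i _ => mul_nonneg (by positivity) (bb_pow_pos (2*i)).le) hksupp
  have hsuppmin : ∀ i ∈ c.support, k ≤ i := by
    intro i hi
    by_contra h
    exact (Finsupp.mem_support_iff.mp hi) (hlow i (by omega))
  have hD'ub : D' < gr^2 * bb^(2*k) := by
    rw [hD']
    exact cg_bound_ge c.support (fun i => c i) k (fun i _ => hcg.1 i)
      (fun i₁ _ i₂ _ h h1 h2 => hcg.2.2.1 i₁ i₂ h h1 h2) hsuppmin
  have hD'lt1 : D' < 1 := by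
    have h2 : gr^2 * bb^(2*k) ≤ gr^2 * bb^2 := by nlinarith [sq_nonneg gr]
    linarith [gold_sq_bb_sq]
  have hD'pos : 0 < D' := lt_of_lt_of_le (bb_pow_pos (2*k)) hD'lb
  -- equate
  have hLL : L₁ = L₂ := by
    apply nat_eq_of_dist_lt
    have : (L₁:ℝ) - L₂ = D - D' := by linarith
    rw [this, abs_lt]; constructor <;> linarith
  have hDD' : D = D' := by
    have h := hCr; rw [← hLL] at h; linarith
  have hdl : bb^(2*k) ≤ D := by rw [hDD']; exact hD'lb
  -- Bezout
  have hcop : IsCoprime ((Nat.fib (2*k) : ℤ)) ((Nat.fib (2*k+1) : ℤ)) := by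
    rw [Nat.isCoprime_iff_coprime]
    simpa using Nat.fib_coprime_fib_succ (2*k)
  obtain ⟨u, v, huv⟩ := hcop
  obtain ⟨a, ha⟩ : ∃ a : ℤ,
      a = u * n - (u * n * Nat.fib (2*k+1) + v * n * Nat.fib (2*k+2) - L₁) * Nat.fib (2*k+1) :=
    ⟨_, rfl⟩
  obtain ⟨b, hb⟩ : ∃ b : ℤ,
      b = v * n + (u * n * Nat.fib (2*k+1) + v * n * Nat.fib (2*k+2) - L₁) * Nat.fib (2*k) :=
    ⟨_, rfl⟩
  have hab : a * Nat.fib (2*k) + b * Nat.fib (2*k+1) = (n:ℤ) := by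
    rw [ha, hb]
    linear_combination (n:ℤ) * huv
  have hcass : (Nat.fib (2*k+1) : ℤ)^2 = Nat.fib (2*k) * Nat.fib (2*k+2) + 1 := by
    have := cassini (2*k)
    have h2 : ((-1:ℤ))^(2*k) = 1 := by rw [pow_mul]; norm_num
    rw [h2] at this; exact this
  have hA₁ : a * Nat.fib (2*k+1) + b * Nat.fib (2*k+2) = (L₁:ℤ) := by
    rw [ha, hb]
    linear_combination (-(u * (n:ℤ) * Nat.fib (2*k+1) + v * n * Nat.fib (2*k+2) - (L₁:ℤ))) * hcass
  -- real key identity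
  have hgrfib : ∀ j : ℕ, gr * Nat.fib j = Nat.fib (j+1) - ψ^j := by
    intro j; have := fibA j; linarith
  have hQkey : bb^(2*k) * ((a:ℝ) - b * bb) = D := by
    have hcast : (a:ℝ) * Nat.fib (2*k) + (b:ℝ) * Nat.fib (2*k+1) = n := by
      exact_mod_cast congrArg (fun z : ℤ => (z:ℝ)) hab
    have e1 : gr * (Nat.fib (2*k) : ℝ) = Nat.fib (2*k+1) - bb^(2*k) := by
      have := hgrfib (2*k); rw [hpsi2k] at this; linarith
    have e2' : gr * (Nat.fib (2*k+1) : ℝ) = Nat.fib (2*k+2) + bb^(2*k) * bb := by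
      have h := hgrfib (2*k+1)
      have e4 : ψ^(2*k+1) = -bb^(2*k+1) := psi_pow_odd k
      rw [show (2*k+1)+1 = 2*k+2 from by ring, e4] at h
      have : bb^(2*k+1) = bb^(2*k) * bb := by ring
      linarith [h, this.ge, this.le]
    have h2 : gr * ((a:ℝ) * Nat.fib (2*k) + (b:ℝ) * Nat.fib (2*k+1))
        = (a:ℝ) * Nat.fib (2*k+1) + (b:ℝ) * Nat.fib (2*k+2)
          - bb^(2*k) * ((a:ℝ) - b * bb) := by
      linear_combination (a:ℝ) * e1 + (b:ℝ) * e2'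
    have h3 : (a:ℝ) * Nat.fib (2*k+1) + (b:ℝ) * Nat.fib (2*k+2) = (L₁:ℝ) := by
      exact_mod_cast congrArg (fun z : ℤ => (z:ℝ)) hA₁
    have h4 : gr * (n:ℝ) = (L₁:ℝ) - bb^(2*k) * ((a:ℝ) - b * bb) := by
      rw [← hcast, h2, h3]
    linarith [hZr]
  obtain ⟨Q, hQdef⟩ : ∃ Q : ℝ, Q = (a:ℝ) - b * bb := ⟨_, rfl⟩
  rw [← hQdef] at hQkey
  have hbpk := bb_pow_pos (2*k)
  have hQ1 : 1 ≤ Q := by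
    have h2 : 1 * bb^(2*k) ≤ Q * bb^(2*k) := by
      rw [one_mul, mul_comm Q (bb^(2*k)), hQkey]; exact hdl
    exact le_of_mul_le_mul_right h2 hbpk
  have hQ2 : Q < gr := by
    have h2 : Q * bb^(2*k) < gr * bb^(2*k) := by
      rw [mul_comm Q (bb^(2*k)), hQkey]; exact hDub
    exact lt_of_mul_lt_mul_right h2 hbpk.le
  have hbnn : 0 ≤ b := by
    by_contra hneg
    push_neg at hneg
    have hb1' : b ≤ -1 := by omega
    have hb1 : (b:ℝ) ≤ -1 := by exact_mod_cast hb1'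
    have har : (a:ℝ) < 1 := by
      have h1 : (a:ℝ) = Q + b * bb := by rw [hQdef]; ring
      have h2 : gr = 1 + bb := gold_eq_bb
      nlinarith [bb_pos, hQ2]
    have ha0 : a ≤ 0 := by
      have : a < 1 := by exact_mod_cast har
      omega
    have hfp : (1:ℤ) ≤ Nat.fib (2*k+1) := by
      have : 0 < Nat.fib (2*k+1) := Nat.fib_pos.mpr (by omega)
      exact_mod_cast this
    have hfp2 : (0:ℤ) ≤ Nat.fib (2*k) := by positivity
    have hterm1 : a * Nat.fib (2*k) ≤ 0 := mul_nonpos_iff.mpr (Or.inr ⟨ha0, hfp2⟩)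
    have hterm2 : b * Nat.fib (2*k+1) ≤ -1 := by nlinarith
    have hneg : (n:ℤ) ≤ -1 := by linarith [hab]
    have : (0:ℤ) ≤ n := by positivity
    omega
  have hann : 1 ≤ a := by
    have hbr : (0:ℝ) ≤ b := by exact_mod_cast hbnn
    have : (1:ℝ) ≤ (a:ℝ) := by
      have : (a:ℝ) = Q + b * bb := by rw [hQdef]; ring
      nlinarith [bb_pos]
    exact_mod_cast this
  refine ⟨a.toNat, ?_, ?_⟩
  · omega
  · have hma : ((a.toNat : ℕ) : ℤ) = a := Int.toNat_of_nonneg (by omega)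
    have hpb : ((b.toNat : ℕ) : ℤ) = b := Int.toNat_of_nonneg hbnn
    have hnm : n = a.toNat * Nat.fib (2*k) + b.toNat * Nat.fib (2*k+1) := by
      have : ((n:ℕ) : ℤ) = ((a.toNat * Nat.fib (2*k) + b.toNat * Nat.fib (2*k+1) : ℕ) : ℤ) := by
        push_cast
        rw [hma, hpb]
        linarith [hab]
      exact_mod_cast this
    have hmar : ((a.toNat : ℕ) : ℝ) = (a:ℝ) := by
      exact_mod_cast congrArg (fun z : ℤ => (z:ℝ)) hma
    have hpbr : ((b.toNat : ℕ) : ℝ) = (b:ℝ) := by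
      exact_mod_cast congrArg (fun z : ℤ => (z:ℝ)) hpb
    have hfloor : ⌊((a.toNat:ℝ) - 1) * gr⌋₊ = b.toNat := by
      rw [Nat.floor_eq_iff]
      · constructor
        · -- b.toNat ≤ (a.toNat - 1) * gr
          rw [hmar, hpbr]
          have hgb := gold_mul_bb
          nlinarith [hQ1, goldenRatio_pos]
        · rw [hmar, hpbr]
          have hgb := gold_mul_bb
          have hgs := goldenRatio_sq
          nlinarith [hQ2, goldenRatio_pos]
      · rw [hmar]
        have : (1:ℝ) ≤ (a:ℝ) := by exact_mod_cast hann
        nlinarith [goldenRatio_pos]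
    rw [hfloor]
    exact hnm

set_option maxHeartbeats 1000000 in
lemma zeck_side (k n : ℕ) (hk : 1 ≤ k) (hn1 : 1 ≤ n) (M : ℕ) (δ : ℝ)
    (hδl : bb^(2*k) ≤ δ) (hδu : δ < gr * bb^(2*k)) (hδpos : 0 < δ) (hδ1 : δ < 1)
    (hkey : gr * (n:ℝ) = (M:ℝ) - δ) : ZeckMin k n := by
  have hbb2k_le : bb^(2*k) ≤ bb^2 := bb_pow_le (by omega)
  obtain ⟨s, hz, -⟩ := zeck_exists n
  have hne : s.Nonempty := by
    rcases Finset.eq_empty_or_nonempty s with rfl | h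
    · exfalso; have := hz.2.2; simp at this; omega
    · exact h
  obtain ⟨j₀, hj₀⟩ : ∃ j₀, j₀ = s.min' hne := ⟨_, rfl⟩
  have hj₀s : j₀ ∈ s := by rw [hj₀]; exact s.min'_mem hne
  have hj₀min : ∀ i ∈ s, j₀ ≤ i := by intro i hi; rw [hj₀]; exact s.min'_le i hi
  have hj₀2 : 2 ≤ j₀ := hz.1 _ hj₀s
  obtain ⟨L₁, hL₁⟩ : ∃ L : ℕ, L = ∑ i ∈ s, Nat.fib (i+1) := ⟨_, rfl⟩
  obtain ⟨D, hD⟩ : ∃ x : ℝ, x = ∑ i ∈ s, ψ^i := ⟨_, rfl⟩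
  have hZr : (L₁:ℝ) = gr * n + D := by rw [hL₁, hD]; exact zeck_real hz
  have herase : ∀ i ∈ s.erase j₀, j₀+2 ≤ i := by
    intro i hi
    have h1 : i ∈ s := Finset.mem_of_mem_erase hi
    have h2 : i ≠ j₀ := Finset.ne_of_mem_erase hi
    have h3 : i ≠ j₀+1 := by rintro rfl; exact hz.2.1 j₀ hj₀s (by simpa using h1)
    have := hj₀min i h1; omega
  have hDdec : D = ψ^j₀ + ∑ i ∈ s.erase j₀, ψ^i := by
    rw [hD]; exact (Finset.add_sum_erase s (fun i => ψ^i) hj₀s).symm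
  have hT : |∑ i ∈ s.erase j₀, ψ^i| < bb^(j₀+1) := by
    have h := zsum_abs_lt (s.erase j₀) (j₀+2)
      (fun i hi hmem => hz.2.1 i (Finset.mem_of_mem_erase hi) (Finset.mem_of_mem_erase hmem))
      herase
    rwa [phi_bb_bb j₀] at h
  rw [abs_lt] at hT
  have hDabs : |D| < gr * bb^j₀ := by
    rw [hD]
    exact zsum_abs_lt s j₀ hz.2.1 hj₀min
  rw [abs_lt] at hDabs
  -- L₁ = M
  have hdiff : (L₁:ℝ) - M = D - δ := by linarith [hkey]
  have hDlt1 : D < 1 := by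
    have h1 : gr * bb^j₀ ≤ gr * bb^2 := by
      have := bb_pow_le hj₀2; nlinarith [goldenRatio_pos]
    have := gr_bb_sq
    linarith [bb_lt_one, hDabs.2]
  have hDgtm1 : -1 < D := by
    have h1 : gr * bb^j₀ ≤ gr * bb^2 := by
      have := bb_pow_le hj₀2; nlinarith [goldenRatio_pos]
    have := gr_bb_sq
    linarith [bb_lt_one, hDabs.1]
  have hz01 : (L₁:ℤ) - M = 0 ∨ (L₁:ℤ) - M = -1 := by
    have hlt : ((L₁:ℤ) - M : ℝ) < 1 := by push_cast; linarith
    have hgt : (-2:ℝ) < ((L₁:ℤ) - M : ℝ) := by push_cast; linarith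
    have hlt' : (L₁:ℤ) - M < 1 := by exact_mod_cast hlt
    have hgt' : (-2:ℤ) < (L₁:ℤ) - M := by exact_mod_cast hgt
    omega
  have hDδ : D = δ := by
    rcases hz01 with h | h
    · have : (L₁:ℝ) = M := by
        have : ((L₁:ℤ):ℝ) = ((M:ℕ):ℝ) := by
          have : (L₁:ℤ) = M := by omega
          exact_mod_cast this
        exact_mod_cast this
      linarith
    · -- contradiction case
      exfalso
      have hLM : (L₁:ℝ) - M = -1 := by
        have : ((L₁:ℤ) - M : ℝ) = -1 := by exact_mod_cast h
        push_cast at this; linarith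
      have hDeq : D = δ - 1 := by linarith
      have hDneg : D < bb - 1 := by
        have h2 : gr * bb^(2*k) ≤ gr * bb^2 := by nlinarith [goldenRatio_pos]
        have := gr_bb_sq
        linarith
      have hbb1 : bb - 1 = -bb^2 := by have := bb_sq; linarith
      rcases Nat.even_or_odd j₀ with ⟨t, ht⟩ | ⟨t, ht⟩
      · -- j₀ even : D > 0
        have hψ : ψ^j₀ = bb^j₀ := by rw [ht, show t + t = 2*t from by ring]; exact psi_pow_even t
        have hlt' : bb^(j₀+1) < bb^j₀ := bb_pow_succ_lt j₀
        have : 0 < D := by rw [hDdec, hψ]; linarith [hT.1]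
        nlinarith [bb_pow_pos 2]
      · -- j₀ odd : D > -bb^2
        have hψ : ψ^j₀ = -bb^j₀ := by
          rw [ht, show 2*t+1 = 2*t+1 from rfl]; exact psi_pow_odd t
        have hj₀3 : 3 ≤ j₀ := by omega
        have hD3 : -(gr * bb^j₀) < D := by
          rw [hDdec, hψ]
          have : gr * bb^j₀ = bb^j₀ + bb^(j₀+1) := by
            rw [gold_eq_bb, pow_succ]; ring
          linarith [hT.1]
        have hgrb3 : gr * bb^j₀ ≤ gr * bb^3 := by
          have := bb_pow_le hj₀3; nlinarith [goldenRatio_pos]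
        have hgrb3' : gr * bb^3 = bb^2 := phi_bb_bb 1
        linarith
  -- now show j₀ = 2k
  have hj₀eq : j₀ = 2*k := by
    by_contra hne'
    rcases Nat.lt_or_ge j₀ (2*k) with hlt | hge
    · -- j₀ < 2k
      rcases Nat.even_or_odd j₀ with ⟨t, ht⟩ | ⟨t, ht⟩
      · -- j₀ even, j₀ ≤ 2k-2
        have hψ : ψ^j₀ = bb^j₀ := by rw [ht, show t + t = 2*t from by ring]; exact psi_pow_even t
        have hj₀le : j₀ + 2 ≤ 2*k := by omega
        have hblow : bb^(2*k) ≤ bb^(j₀+2) := bb_pow_le hj₀le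
        -- gr^2 * bb^(2k) ≤ gr^2 * bb^(j₀+2) = bb^j₀
        have key1 : gr^2 * bb^(j₀+2) = bb^j₀ := by
          have : bb^(j₀+2) = bb^2 * bb^j₀ := by ring
          rw [this, ← mul_assoc, gold_sq_bb_sq, one_mul]
        rcases Finset.eq_empty_or_nonempty (s.erase j₀) with hemp | hne2
        · -- D = bb^j₀ ≥ gr²bb^{2k} > gr bb^{2k} > δ
          have hDeq : D = bb^j₀ := by rw [hDdec, hψ, hemp]; simp
          have h1 : gr^2 * bb^(2*k) ≤ bb^j₀ := by
            rw [← key1]; nlinarith [sq_nonneg gr]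
          have h2 : gr * bb^(2*k) < gr^2 * bb^(2*k) := by
            have hg1 : gr < gr^2 := by nlinarith [goldenRatio_sq, goldenRatio_pos, one_lt_goldenRatio]
            nlinarith
          linarith [hDδ, hδu]
        · obtain ⟨j₁, hj₁⟩ : ∃ j₁, j₁ = (s.erase j₀).min' hne2 := ⟨_, rfl⟩
          have hj₁s : j₁ ∈ s.erase j₀ := by rw [hj₁]; exact Finset.min'_mem _ _
          have hj₁min : ∀ i ∈ s.erase j₀, j₁ ≤ i := by
            intro i hi; rw [hj₁]; exact Finset.min'_le _ i hi
          have hj₁ge : j₀ + 2 ≤ j₁ := herase j₁ hj₁s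
          have herase2 : ∀ i ∈ (s.erase j₀).erase j₁, j₁+2 ≤ i := by
            intro i hi
            have h1 : i ∈ s.erase j₀ := Finset.mem_of_mem_erase hi
            have h2 : i ≠ j₁ := Finset.ne_of_mem_erase hi
            have h3 : i ≠ j₁+1 := by
              rintro rfl
              exact hz.2.1 j₁ (Finset.mem_of_mem_erase hj₁s) (Finset.mem_of_mem_erase h1)
            have := hj₁min i h1; omega
          have hT2 : |∑ i ∈ (s.erase j₀).erase j₁, ψ^i| < bb^(j₁+1) := by
            have h := zsum_abs_lt ((s.erase j₀).erase j₁) (j₁+2)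
              (fun i hi hmem => hz.2.1 i (Finset.mem_of_mem_erase (Finset.mem_of_mem_erase hi))
                (Finset.mem_of_mem_erase (Finset.mem_of_mem_erase hmem)))
              herase2
            rwa [phi_bb_bb j₁] at h
          rw [abs_lt] at hT2
          have hTdec : ∑ i ∈ s.erase j₀, ψ^i = ψ^j₁ + ∑ i ∈ (s.erase j₀).erase j₁, ψ^i :=
            (Finset.add_sum_erase _ (fun i => ψ^i) hj₁s).symm
          rcases Nat.even_or_odd j₁ with ⟨t₁, ht₁⟩ | ⟨t₁, ht₁⟩
          · -- j₁ even : tail > 0, D > bb^j₀ ≥ gr² bb^{2k} > δ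
            have hψ₁ : ψ^j₁ = bb^j₁ := by
              rw [ht₁, show t₁ + t₁ = 2*t₁ from by ring]; exact psi_pow_even t₁
            have hlt₁ : bb^(j₁+1) < bb^j₁ := bb_pow_succ_lt j₁
            have htpos : 0 < ∑ i ∈ s.erase j₀, ψ^i := by
              rw [hTdec, hψ₁]; linarith [hT2.1]
            have hDgt : bb^j₀ < D := by rw [hDdec, hψ]; linarith
            have h1 : gr^2 * bb^(2*k) ≤ bb^j₀ := by
              rw [← key1]; nlinarith [sq_nonneg gr]
            have h2 : gr * bb^(2*k) < gr^2 * bb^(2*k) := by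
              have hg1 : gr < gr^2 := by nlinarith [goldenRatio_sq, goldenRatio_pos, one_lt_goldenRatio]
              exact mul_lt_mul_of_pos_right hg1 (bb_pow_pos (2*k))
            linarith [hDδ, hδu]
          · -- j₁ odd : j₁ ≥ j₀+3, tail > -bb^{j₀+2}, D > bb^{j₀+1} ≥ bb^{2k-1} = gr bb^{2k} > δ
            have hψ₁ : ψ^j₁ = -bb^j₁ := by rw [ht₁]; exact psi_pow_odd t₁
            have hj₁odd : j₀ + 3 ≤ j₁ := by omega
            have hgrj₁ : gr * bb^j₁ ≤ gr * bb^(j₀+3) := by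
              have := bb_pow_le hj₁odd; nlinarith [goldenRatio_pos]
            have hgrj₁' : gr * bb^(j₀+3) = bb^(j₀+2) := phi_bb_bb (j₀+1)
            have htail : -(bb^(j₀+2)) < ∑ i ∈ s.erase j₀, ψ^i := by
              rw [hTdec, hψ₁]
              have hgreq : gr * bb^j₁ = bb^j₁ + bb^(j₁+1) := by
                rw [gold_eq_bb, pow_succ]; ring
              linarith [hT2.1]
            have hDgt : bb^j₀ - bb^(j₀+2) < D := by rw [hDdec, hψ]; linarith
            have hiden : bb^j₀ - bb^(j₀+2) = bb^(j₀+1) := by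
              have h1 : bb^(j₀+2) = bb^2 * bb^j₀ := by ring
              have h2 : bb^(j₀+1) = bb * bb^j₀ := by ring
              rw [h1, h2, bb_sq]; ring
            have hj₀k : j₀ + 1 ≤ 2*k - 1 := by omega
            have h2km1 : 2*k-1+1 = 2*k := by omega
            have hblow : bb^(2*k-1) ≤ bb^(j₀+1) := bb_pow_le hj₀k
            have hgrbk : gr * bb^(2*k) = bb^(2*k-1) := by
              have := phi_bb_bb (2*k-2)
              rw [show 2*k-2+2 = 2*k from by omega, show 2*k-2+1 = 2*k-1 from by omega] at this
              exact this
            linarith [hDδ, hδu]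
      · -- j₀ odd : D < 0
        have hψ : ψ^j₀ = -bb^j₀ := by rw [ht]; exact psi_pow_odd t
        have hDneg : D < 0 := by
          rw [hDdec, hψ]
          have hlt' : bb^(j₀+1) < bb^j₀ := bb_pow_succ_lt j₀
          linarith [hT.2]
        linarith [hDδ, hδpos]
    · -- j₀ > 2k
      have hge' : 2*k + 1 ≤ j₀ := by omega
      have h1 : gr * bb^j₀ ≤ gr * bb^(2*k+1) := by
        have := bb_pow_le hge'; nlinarith [goldenRatio_pos]
      have h2 : gr * bb^(2*k+1) = bb^(2*k) := by
        have := phi_bb_bb (2*k-1)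
        rw [show 2*k-1+2 = 2*k+1 from by omega, show 2*k-1+1 = 2*k from by omega] at this
        exact this
      linarith [hDabs.2, hDδ, hδl]
  exact ⟨s, hz, by rw [← hj₀eq]; exact hj₀s, by rw [← hj₀eq]; exact hj₀min⟩

set_option maxHeartbeats 1000000 in
lemma cg_side (k n : ℕ) (hk : 1 ≤ k) (hn1 : 1 ≤ n) (M : ℕ) (δ : ℝ)
    (hδl : bb^(2*k) ≤ δ) (hδu : δ < gr * bb^(2*k)) (hδpos : 0 < δ) (hδ1 : δ < 1)
    (hkey : gr * (n:ℝ) = (M:ℝ) - δ) : CGMin k n := by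
  have hnfib : n < Nat.fib (2*n+2) := by have := two_le_fib_two_mul n; omega
  obtain ⟨c, hc2, hsep, hcsum, hcsupp, -⟩ := cg_exists_aux n n hnfib
  have hc0 : c 0 = 0 := by
    by_contra h
    have := (hcsupp 0 (Finsupp.mem_support_iff.mpr h)).1; omega
  have hcg : IsCG n c := ⟨hc2, hc0, hsep, hcsum.symm⟩
  have hsne : c.support.Nonempty := by
    rcases Finset.eq_empty_or_nonempty c.support with hemp | h
    · exfalso
      have : c.sum (fun i a => a * Nat.fib (2*i)) = 0 := by
        rw [Finsupp.sum, hemp, Finset.sum_empty]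
      omega
    · exact h
  obtain ⟨k'', hk''⟩ : ∃ x, x = c.support.min' hsne := ⟨_, rfl⟩
  have hk''s : k'' ∈ c.support := by rw [hk'']; exact Finset.min'_mem _ _
  have hk''min : ∀ i ∈ c.support, k'' ≤ i := by
    intro i hi; rw [hk'']; exact Finset.min'_le _ i hi
  have hk''1 : 1 ≤ k'' := (hcsupp k'' hk''s).1
  obtain ⟨L₂, hL₂⟩ : ∃ L : ℕ, L = ∑ i ∈ c.support, (c i) * Nat.fib (2*i+1) := ⟨_, rfl⟩
  obtain ⟨D', hD'⟩ : ∃ x : ℝ, x = ∑ i ∈ c.support, (c i : ℝ) * bb^(2*i) := ⟨_, rfl⟩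
  have hCr : (L₂:ℝ) = gr * n + D' := by rw [hL₂, hD']; exact cg_real hcg
  have hD'lb : bb^(2*k'') ≤ D' := by
    rw [hD']
    have hck'' : 1 ≤ c k'' := by
      have := Finsupp.mem_support_iff.mp hk''s; omega
    have h1 : bb^(2*k'') ≤ (c k'' : ℝ) * bb^(2*k'') := by
      have : (1:ℝ) ≤ (c k'' : ℝ) := by exact_mod_cast hck''
      nlinarith [bb_pow_pos (2*k'')]
    calc bb^(2*k'') ≤ (c k'' : ℝ) * bb^(2*k'') := h1
    _ ≤ _ := Finset.single_le_sum (f := fun i => (c i : ℝ) * bb^(2*i))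
        (fun i _ => mul_nonneg (by positivity) (bb_pow_pos (2*i)).le) hk''s
  have hD'ub : D' < gr^2 * bb^(2*k'') := by
    rw [hD']
    exact cg_bound_ge c.support (fun i => c i) k'' (fun i _ => hc2 i)
      (fun i₁ _ i₂ _ h h1 h2 => hsep i₁ i₂ h h1 h2) hk''min
  have hD'pos : 0 < D' := lt_of_lt_of_le (bb_pow_pos (2*k'')) hD'lb
  have hD'lt1 : D' < 1 := by
    have h2 : gr^2 * bb^(2*k'') ≤ gr^2 * bb^2 := by
      have := bb_pow_le (show 2 ≤ 2*k'' by omega)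
      nlinarith [sq_nonneg gr]
    linarith [gold_sq_bb_sq]
  have hdiff : (L₂:ℝ) - M = D' - δ := by linarith [hkey]
  have hLM : L₂ = M := by
    apply nat_eq_of_dist_lt
    rw [show (L₂:ℝ) - M = D' - δ from hdiff, abs_lt]
    constructor <;> linarith
  have hD'δ : D' = δ := by
    have : (L₂:ℝ) = M := by exact_mod_cast hLM
    linarith
  have hkeq : k'' = k := by
    by_contra hne'
    rcases Nat.lt_or_ge k'' k with hlt | hge
    · -- k'' < k : D' ≥ bb^{2k''} ≥ bb^{2k-2} = gr² bb^{2k} > gr bb^{2k} > δ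
      have h1 : 2*k'' ≤ 2*k - 2 := by omega
      have h2 : bb^(2*k-2) ≤ bb^(2*k'') := bb_pow_le h1
      have h3 : gr^2 * bb^(2*k) = bb^(2*k-2) := by
        have : bb^(2*k) = bb^2 * bb^(2*k-2) := by
          rw [← pow_add, show 2 + (2*k-2) = 2*k from by omega]
        rw [this, ← mul_assoc, gold_sq_bb_sq, one_mul]
      have h4 : gr * bb^(2*k) < gr^2 * bb^(2*k) := by
        have hg1 : gr < gr^2 := by nlinarith [goldenRatio_sq, goldenRatio_pos, one_lt_goldenRatio]
        exact mul_lt_mul_of_pos_right hg1 (bb_pow_pos (2*k))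
      linarith [hD'δ, hδu]
    · -- k'' > k : D' < gr² bb^{2k''} ≤ gr² bb^{2k+2} = bb^{2k} ≤ δ
      have h1 : 2*(k+1) ≤ 2*k'' := by omega
      have h2 : bb^(2*k'') ≤ bb^(2*k+2) := by
        have := bb_pow_le h1
        rwa [show 2*(k+1) = 2*k+2 from by ring] at this
      have h3 : gr^2 * bb^(2*k+2) = bb^(2*k) := by
        have : bb^(2*k+2) = bb^2 * bb^(2*k) := by ring
        rw [this, ← mul_assoc, gold_sq_bb_sq, one_mul]
      have h4 : gr^2 * bb^(2*k'') ≤ gr^2 * bb^(2*k+2) := by nlinarith [sq_nonneg gr]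
      linarith [hD'δ, hδl]
  refine ⟨c, hcg, ?_, ?_⟩
  · have := Finsupp.mem_support_iff.mp hk''s; rw [hkeq] at this; omega
  · intro i hi
    by_contra h
    have hmem : i ∈ c.support := Finsupp.mem_support_iff.mpr h
    have := hk''min i hmem
    omega

set_option maxHeartbeats 1000000 in
lemma incl2 (k m : ℕ) (hk : 1 ≤ k) (hm : 1 ≤ m) :
    ZeckMin k (m * Nat.fib (2*k) + ⌊((m:ℝ)-1) * gr⌋₊ * Nat.fib (2*k+1))
      ∧ CGMin k (m * Nat.fib (2*k) + ⌊((m:ℝ)-1) * gr⌋₊ * Nat.fib (2*k+1)) := by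
  obtain ⟨p, hp⟩ : ∃ p : ℕ, p = ⌊((m:ℝ)-1) * gr⌋₊ := ⟨_, rfl⟩
  obtain ⟨n, hn⟩ : ∃ n : ℕ, n = m * Nat.fib (2*k) + p * Nat.fib (2*k+1) := ⟨_, rfl⟩
  rw [← hp, ← hn]
  have hm1 : (1:ℝ) ≤ (m:ℝ) := by exact_mod_cast hm
  have hge : (0:ℝ) ≤ ((m:ℝ)-1) * gr := by nlinarith [goldenRatio_pos]
  have hp1 : (p:ℝ) ≤ ((m:ℝ)-1) * gr := by rw [hp]; exact Nat.floor_le hge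
  have hp2 : ((m:ℝ)-1) * gr < p + 1 := by rw [hp]; exact Nat.lt_floor_add_one _
  have hgb := gold_mul_bb
  have hgeq := gold_eq_bb
  have hQ1 : 1 ≤ (m:ℝ) - p * bb := by nlinarith [bb_pos]
  have hQ2 : (m:ℝ) - p * bb < gr := by nlinarith [bb_pos, goldenRatio_pos]
  have hbpk := bb_pow_pos (2*k)
  obtain ⟨δ, hδ⟩ : ∃ x : ℝ, x = bb^(2*k) * ((m:ℝ) - p * bb) := ⟨_, rfl⟩
  have hδl : bb^(2*k) ≤ δ := by rw [hδ]; nlinarith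
  have hδu : δ < gr * bb^(2*k) := by rw [hδ]; nlinarith
  have hδpos : 0 < δ := lt_of_lt_of_le hbpk hδl
  have hbb2k_le : bb^(2*k) ≤ bb^2 := bb_pow_le (by omega)
  have hδ1 : δ < 1 := by
    have h2 : gr * bb^(2*k) ≤ gr * bb^2 := by nlinarith [goldenRatio_pos]
    have := gr_bb_sq
    linarith [bb_lt_one]
  -- key identity
  obtain ⟨M, hM⟩ : ∃ M : ℕ, M = m * Nat.fib (2*k+1) + p * Nat.fib (2*k+2) := ⟨_, rfl⟩
  have hgrfib : ∀ j : ℕ, gr * Nat.fib j = Nat.fib (j+1) - ψ^j := by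
    intro j; have := fibA j; linarith
  have hkey : gr * (n:ℝ) = (M:ℝ) - δ := by
    have e1 : gr * (Nat.fib (2*k) : ℝ) = Nat.fib (2*k+1) - bb^(2*k) := by
      have h := hgrfib (2*k); rw [psi_pow_even k] at h; linarith
    have e2' : gr * (Nat.fib (2*k+1) : ℝ) = Nat.fib (2*k+2) + bb^(2*k) * bb := by
      have h := hgrfib (2*k+1)
      rw [show (2*k+1)+1 = 2*k+2 from by ring, psi_pow_odd k] at h
      have hpow : bb^(2*k+1) = bb^(2*k) * bb := by ring
      linarith [h, hpow.le, hpow.ge]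
    have hnr : (n:ℝ) = (m:ℝ) * Nat.fib (2*k) + (p:ℝ) * Nat.fib (2*k+1) := by
      rw [hn]; push_cast; ring
    have hMr : (M:ℝ) = (m:ℝ) * Nat.fib (2*k+1) + (p:ℝ) * Nat.fib (2*k+2) := by
      rw [hM]; push_cast; ring
    rw [hnr, hMr, hδ]
    linear_combination (m:ℝ) * e1 + (p:ℝ) * e2'
  have hn1 : 1 ≤ n := by
    have h1 : 0 < Nat.fib (2*k) := Nat.fib_pos.mpr (by omega)
    rw [hn]; have := Nat.mul_le_mul hm h1; nlinarith [Nat.zero_le (p * Nat.fib (2*k+1))]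
  exact ⟨zeck_side k n hk hn1 M δ hδl hδu hδpos hδ1 hkey,
         cg_side k n hk hn1 M δ hδl hδu hδpos hδ1 hkey⟩


theorem overlap_set (k : ℕ) (hk : 1 ≤ k) :
    {n : ℕ | ZeckMin k n ∧ CGMin k n} =
      {x : ℕ | ∃ n : ℕ, 1 ≤ n ∧
        x = n * Nat.fib (2 * k) +
          ⌊((n : ℝ) - 1) * ((1 + Real.sqrt 5) / 2)⌋₊ * Nat.fib (2 * k + 1)} := by
  ext x
  simp only [Set.mem_setOf_eq]
  constructor
  · rintro ⟨⟨s, hz, h2k, hmin⟩, ⟨c, hcg, hck, hlow⟩⟩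
    exact incl1 k x hk s hz h2k hmin c hcg hck hlow
  · rintro ⟨m, hm1, rfl⟩
    exact incl2 k m hk hm1
end
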